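/- arXiv:1907.04994 — 4 statements merged into one kernel-verified Lean document; each statement's English description precedes it below -/
import Mathlib

section
/- Let G = PGL₂(F₇), let A = PSL₂(F₇) regarded as a normal subgroup of index 2 in G, and let H be a Sylow 2-subgroup of G. Then H ∩ A is a Sylow 2-subgroup of A (of order 8), but H ∩ A is not a {2,3}-maximal subgroup of A. -/
/-- A subgroup is a `π`-group if every prime dividing its order lies in `π`. -/
def IsPiGroup (π : Set ℕ) {G : Type*} [Group G] (H : Subgroup G) : Prop :=
  ∀ p : ℕ, p.Prime → p ∣ Nat.card H → p ∈ π

/-- A subgroup is `π`-maximal if it is a `π`-group not properly contained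
in any `π`-subgroup. -/
def IsPiMaximal (π : Set ℕ) {G : Type*} [Group G] (H : Subgroup G) : Prop :=
  IsPiGroup π H ∧ ∀ K : Subgroup G, IsPiGroup π K → H ≤ K → K = H

/-- `A` is normal in `B` (as subgroups of an ambient group). -/
def NormalIn {G : Type*} [Group G] (A B : Subgroup G) : Prop :=
  A ≤ B ∧ ∀ b ∈ B, ∀ a ∈ A, b * a * b⁻¹ ∈ A

/-- A subgroup is subnormal if it is connected to the whole group by a
finite chain, each term normal in the next. -/
def IsSubnormal {G : Type*} [Group G] (A : Subgroup G) : Prop :=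
  Relation.ReflTransGen NormalIn A ⊤

/-- A witness to the `π`-submaximality of `H ≤ G`: a finite group `carrier`,
an embedding `ε : G → carrier` with subnormal image, and a `π`-maximal
subgroup `K` of `carrier` with `ε(H) = ε(G) ∩ K`. -/
structure PiSubmaximalWitness (π : Set ℕ) (G : Type u) [Group G] (H : Subgroup G) :
    Type (u + 1) where
  carrier : Type u
  [grp : Group carrier]
  [fin : Finite carrier]
  ε : G →* carrier
  inj : Function.Injective ε
  subnormal : IsSubnormal ε.range
  K : Subgroup carrier
  maxK : IsPiMaximal π K
  eq : H.map ε = ε.range ⊓ K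

/-- A subgroup `H ≤ G` is `π`-submaximal if `G` embeds as a subnormal subgroup into a
finite group `G*` in which a `π`-maximal subgroup intersects `G` in `H`. -/
def IsPiSubmaximal (π : Set ℕ) {G : Type u} [Group G] (H : Subgroup G) : Prop :=
  Nonempty (PiSubmaximalWitness π G H)

/-- A minimal normal subgroup: nontrivial, normal, containing no nontrivial
proper normal subgroup of the ambient group. -/
def IsMinimalNormal {G : Type*} [Group G] (U : Subgroup G) : Prop :=
  U.Normal ∧ U ≠ ⊥ ∧ ∀ M : Subgroup G, M.Normal → M ≤ U → M = ⊥ ∨ M = U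

/-- `PGL₂(F₇)`, the projective general linear group of degree 2 over the field with
7 elements. -/
abbrev PGL27 : Type :=
  Matrix.GeneralLinearGroup (Fin 2) (ZMod 7) ⧸
    Subgroup.center (Matrix.GeneralLinearGroup (Fin 2) (ZMod 7))

/-- `PSL₂(F₇)` regarded as a subgroup of `PGL₂(F₇)`: the image of `SL₂(F₇)` under the
composite `SL₂(F₇) → GL₂(F₇) → PGL₂(F₇)`. -/
def PSLinPGL27 : Subgroup PGL27 :=
  ((QuotientGroup.mk' (Subgroup.center (Matrix.GeneralLinearGroup (Fin 2) (ZMod 7)))).comp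
    Matrix.SpecialLinearGroup.toGL).range

open Matrix
abbrev GL7 := Matrix.GeneralLinearGroup (Fin 2) (ZMod 7)
abbrev Z7 := Subgroup.center GL7

def uu : GL7 := ⟨!![1,1;0,1], !![1,-1;0,1], by decide, by decide⟩
def vv : GL7 := ⟨!![1,0;1,1], !![1,0;-1,1], by decide, by decide⟩

theorem mem_center_iff' (x : GL7) :
    x ∈ Z7 ↔ x.val 1 0 = 0 ∧ x.val 0 1 = 0 ∧ x.val 0 0 = x.val 1 1 := by
  constructor
  · intro hx
    have h := Subgroup.mem_center_iff.mp hx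
    have hu := congrArg Units.val (h uu)
    have hv := congrArg Units.val (h vv)
    rw [Units.val_mul, Units.val_mul] at hu hv
    have hu00 := congrFun (congrFun hu 0) 0
    have hu01 := congrFun (congrFun hu 0) 1
    have hv11 := congrFun (congrFun hv 1) 1
    simp [uu, vv, Matrix.mul_apply, Fin.sum_univ_two] at hu00 hu01 hv11
    exact ⟨hu00, hv11, by linear_combination -hu01⟩
  · rintro ⟨h10, h01, hd⟩
    have hx : x.val = x.val 0 0 • (1 : Matrix (Fin 2) (Fin 2) (ZMod 7)) := by
      ext i j
      fin_cases i <;> fin_cases j <;>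
        simp [Matrix.one_apply, h10, h01, hd.symm]
    refine Subgroup.mem_center_iff.mpr fun g => Units.ext ?_
    rw [Units.val_mul, Units.val_mul, hx, smul_mul_assoc, mul_smul_comm, one_mul, mul_one]

instance pgldec : DecidableEq PGL27 := fun a b =>
  Quotient.recOnSubsingleton₂ a b fun x y =>
    decidable_of_iff
      ((x⁻¹ * y).val 1 0 = 0 ∧ (x⁻¹ * y).val 0 1 = 0 ∧
        (x⁻¹ * y).val 0 0 = (x⁻¹ * y).val 1 1)
      (by rw [← mem_center_iff', ← QuotientGroup.eq])

def sl (a b c d : ZMod 7) (h : a * d - b * c = 1 := by decide) :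
    Matrix.SpecialLinearGroup (Fin 2) (ZMod 7) :=
  ⟨!![a, b; c, d], by rw [Matrix.det_fin_two_of]; exact h⟩

def el (a b c d : ZMod 7) (h : a * d - b * c = 1 := by decide) : PGL27 :=
  QuotientGroup.mk (Matrix.SpecialLinearGroup.toGL (sl a b c d h))

def Kset : Finset PGL27 := {el 0 1 6 1, el 0 2 3 6, el 0 3 2 0, el 1 0 0 1, el 1 1 5 6, el 1 2 3 0, el 1 3 4 6, el 1 4 2 2, el 1 5 6 3, el 1 6 1 0, el 2 0 2 4, el 2 1 3 2, el 2 2 1 5, el 2 3 5 1, el 2 4 0 4, el 2 5 6 5, el 2 6 4 2, el 3 0 2 5, el 3 1 4 4, el 3 2 1 1, el 3 3 6 4, el 3 4 0 5, el 3 5 5 4, el 3 6 3 4}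

def Qset : Finset PGL27 := {el 0 3 2 0, el 1 0 0 1, el 1 5 6 3, el 2 5 6 5, el 3 2 1 1, el 3 3 6 4, el 3 5 5 4, el 3 6 3 4}

set_option maxHeartbeats 4000000 in
theorem Kmul : ∀ a ∈ Kset, ∀ b ∈ Kset, a * b ∈ Kset := by
  simp only [Kset, Finset.mem_insert, Finset.mem_singleton]
  rintro a (rfl|rfl|rfl|rfl|rfl|rfl|rfl|rfl|rfl|rfl|rfl|rfl|rfl|rfl|rfl|rfl|rfl|rfl|rfl|rfl|rfl|rfl|rfl|rfl) b (rfl|rfl|rfl|rfl|rfl|rfl|rfl|rfl|rfl|rfl|rfl|rfl|rfl|rfl|rfl|rfl|rfl|rfl|rfl|rfl|rfl|rfl|rfl|rfl) <;> decide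

theorem Kinv : ∀ a ∈ Kset, a⁻¹ ∈ Kset := by
  simp only [Kset, Finset.mem_insert, Finset.mem_singleton]
  rintro a (rfl|rfl|rfl|rfl|rfl|rfl|rfl|rfl|rfl|rfl|rfl|rfl|rfl|rfl|rfl|rfl|rfl|rfl|rfl|rfl|rfl|rfl|rfl|rfl) <;> decide

theorem Kone : (1 : PGL27) ∈ Kset := by decide

set_option maxHeartbeats 1000000 in
theorem Qmul : ∀ a ∈ Qset, ∀ b ∈ Qset, a * b ∈ Qset := by
  simp only [Qset, Finset.mem_insert, Finset.mem_singleton]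
  rintro a (rfl|rfl|rfl|rfl|rfl|rfl|rfl|rfl) b (rfl|rfl|rfl|rfl|rfl|rfl|rfl|rfl) <;> decide

theorem Qinv : ∀ a ∈ Qset, a⁻¹ ∈ Qset := by
  simp only [Qset, Finset.mem_insert, Finset.mem_singleton]
  rintro a (rfl|rfl|rfl|rfl|rfl|rfl|rfl|rfl) <;> decide

theorem Qone : (1 : PGL27) ∈ Qset := by decide

theorem QsubK : ∀ a ∈ Qset, a ∈ Kset := by
  simp only [Qset, Finset.mem_insert, Finset.mem_singleton]
  rintro a (rfl|rfl|rfl|rfl|rfl|rfl|rfl|rfl) <;> decide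

set_option maxHeartbeats 4000000 in
theorem Kcard : Kset.card = 24 := by decide

set_option maxHeartbeats 2000000 in
theorem Qcard : Qset.card = 8 := by decide

noncomputable section

instance fact7 : Fact (Nat.Prime 7) := ⟨by norm_num⟩

def sHom : (ZMod 7)ˣ →* GL7 :=
  Units.map (algebraMap (ZMod 7) (Matrix (Fin 2) (Fin 2) (ZMod 7))).toMonoidHom

theorem sHom_val (c : (ZMod 7)ˣ) : (sHom c).val = (c : ZMod 7) • (1 : Matrix (Fin 2) (Fin 2) (ZMod 7)) := by
  simp [sHom, Algebra.algebraMap_eq_smul_one]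

theorem sHom_mem_center (c : (ZMod 7)ˣ) : sHom c ∈ Z7 := by
  rw [mem_center_iff']
  simp [sHom_val, Matrix.one_apply]

def χ : GL7 →* (ZMod 7)ˣ := (powMonoidHom 3).comp Matrix.GeneralLinearGroup.det

theorem center_le_ker : Z7 ≤ χ.ker := by
  intro z hz
  obtain ⟨h10, h01, hd⟩ := (mem_center_iff' z).mp hz
  set c := z.val 0 0 with hc
  have hz' : z.val = c • (1 : Matrix (Fin 2) (Fin 2) (ZMod 7)) := by
    ext i j
    fin_cases i <;> fin_cases j <;> simp [Matrix.one_apply, h10, h01, hd.symm] <;> rfl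
  have hdet : (Matrix.GeneralLinearGroup.det z).val = c ^ 2 := by
    rw [Matrix.GeneralLinearGroup.val_det_apply, hz', Matrix.det_smul]
    simp
  have hc0 : c ≠ 0 := by
    have hne := (Matrix.GeneralLinearGroup.det z).ne_zero
    rw [hdet] at hne
    exact fun h => hne (by rw [h]; ring)
  have hkey : (Matrix.GeneralLinearGroup.det z).val ^ 3 = 1 := by
    rw [hdet, ← pow_mul]
    have h6 := ZMod.pow_card_sub_one_eq_one hc0
    norm_num at h6 ⊢
    exact h6
  rw [MonoidHom.mem_ker]
  ext
  simpa [χ, powMonoidHom] using hkey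

def χ' : PGL27 →* (ZMod 7)ˣ := QuotientGroup.lift Z7 χ center_le_ker

theorem psl_eq_ker : PSLinPGL27 = χ'.ker := by
  ext x
  constructor
  · rintro ⟨s, rfl⟩
    have h1 : (Matrix.GeneralLinearGroup.det (Matrix.SpecialLinearGroup.toGL s)) = 1 := by
      ext
      rw [Matrix.GeneralLinearGroup.val_det_apply]
      exact s.prop
    have : χ (Matrix.SpecialLinearGroup.toGL s) = 1 := by
      simp [χ, h1, powMonoidHom]
    simpa [MonoidHom.mem_ker, χ'] using this
  · intro hx
    obtain ⟨g, rfl⟩ := QuotientGroup.mk_surjective x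
    rw [MonoidHom.mem_ker] at hx
    have hχ : χ g = 1 := by simpa [χ'] using hx
    have hcube : (Matrix.GeneralLinearGroup.det g) ^ 3 = 1 := by
      simpa [χ, powMonoidHom] using hχ
    have hsq : ∀ c : (ZMod 7)ˣ, c ^ 3 = 1 → ∃ d : (ZMod 7)ˣ, d * d = c := by decide
    obtain ⟨d, hd⟩ := hsq _ hcube
    set t := (sHom d)⁻¹ * g with ht
    have hgdet : g.val.det = (d : ZMod 7) * (d : ZMod 7) := by
      have h2 := congrArg Units.val hd
      rw [Units.val_mul, Matrix.GeneralLinearGroup.val_det_apply] at h2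
      exact h2.symm
    have hdet_t : t.val.det = 1 := by
      have hv : t.val = ((d⁻¹ : (ZMod 7)ˣ) : ZMod 7) • g.val := by
        rw [ht, Units.val_mul, ← map_inv, sHom_val, smul_mul_assoc, one_mul]
      rw [hv, Matrix.det_smul, hgdet]
      have hdnz : (d : ZMod 7) ≠ 0 := d.ne_zero
      rw [Units.val_inv_eq_inv_val, Fintype.card_fin, sq, mul_mul_mul_comm, inv_mul_cancel₀ hdnz, one_mul]
    refine ⟨⟨t.val, hdet_t⟩, ?_⟩
    have htoGL : Matrix.SpecialLinearGroup.toGL ⟨t.val, hdet_t⟩ = t := Units.ext rfl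
    show (QuotientGroup.mk' Z7) (Matrix.SpecialLinearGroup.toGL ⟨t.val, hdet_t⟩) = _
    rw [htoGL, ht, _root_.map_mul, _root_.map_inv]
    have h1 : (QuotientGroup.mk' Z7) (sHom d) = 1 :=
      (QuotientGroup.eq_one_iff _).mpr (sHom_mem_center d)
    rw [h1, inv_one, one_mul]
    rfl

instance pslNormal : PSLinPGL27.Normal := psl_eq_ker ▸ χ'.normal_ker

def S2 : Subgroup (ZMod 7)ˣ where
  carrier := {1, -1}
  one_mem' := by left; rfl
  mul_mem' := by
    rintro a b (rfl | ha) (rfl | hb) <;>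
      simp_all [Set.mem_insert_iff, Set.mem_singleton_iff] <;> decide
  inv_mem' := by
    rintro a (rfl | ha) <;> simp_all [Set.mem_insert_iff, Set.mem_singleton_iff] <;> decide

def g3 : GL7 := ⟨!![3,0;0,1], !![5,0;0,1], by decide, by decide⟩

theorem range_eq_S2 : χ'.range = S2 := by
  apply le_antisymm
  · rintro _ ⟨x, rfl⟩
    induction x using QuotientGroup.induction_on with
    | H g =>
      show χ g ∈ S2
      have : ∀ c : (ZMod 7)ˣ, c ^ 3 = 1 ∨ c ^ 3 = -1 := by decide
      rcases this (Matrix.GeneralLinearGroup.det g) with h | h <;>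
        [left; right] <;> simpa [χ, powMonoidHom] using h
  · rintro x (rfl | hx)
    · exact ⟨1, map_one χ'⟩
    · rw [Set.mem_singleton_iff] at hx
      subst hx
      exact ⟨QuotientGroup.mk g3, by decide⟩

theorem card_S2 : Nat.card S2 = 2 := by
  have : (S2 : Set (ZMod 7)ˣ) = {1, -1} := rfl
  rw [← SetLike.coe_sort_coe, this, Nat.card_coe_set_eq,
    Set.ncard_pair (by decide : (1 : (ZMod 7)ˣ) ≠ -1)]

theorem psl_index : PSLinPGL27.index = 2 := by
  rw [psl_eq_ker, Subgroup.index_ker, range_eq_S2, card_S2]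

theorem card_GL7 : Nat.card GL7 = 2016 := by
  rw [Matrix.card_GL_field, Fin.prod_univ_two]
  norm_num [ZMod.card]

theorem center_eq_range : Z7 = sHom.range := by
  apply le_antisymm
  · intro z hz
    obtain ⟨h10, h01, hd⟩ := (mem_center_iff' z).mp hz
    set c := z.val 0 0 with hc
    have hz' : z.val = c • (1 : Matrix (Fin 2) (Fin 2) (ZMod 7)) := by
      ext i j
      fin_cases i <;> fin_cases j <;> simp [Matrix.one_apply, h10, h01, hd.symm] <;> rfl
    have hdet : (Matrix.GeneralLinearGroup.det z).val = c ^ 2 := by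
      rw [Matrix.GeneralLinearGroup.val_det_apply, hz', Matrix.det_smul]
      simp
    have hc0 : c ≠ 0 := by
      have hne := (Matrix.GeneralLinearGroup.det z).ne_zero
      rw [hdet] at hne
      exact fun h => hne (by rw [h]; ring)
    refine ⟨Units.mk0 c hc0, Units.ext ?_⟩
    rw [sHom_val, hz']
    rfl
  · rintro _ ⟨c, rfl⟩
    exact sHom_mem_center c

theorem sHom_inj : Function.Injective sHom := by
  intro a b h
  have := congrArg (fun u : GL7 => u.val 0 0) h
  simp only [sHom_val, Matrix.smul_apply, Matrix.one_apply, if_pos rfl] at this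
  ext
  simpa using this

theorem card_Z7 : Nat.card Z7 = 6 := by
  rw [_root_.center_eq_range]
  have e1 : ↥sHom.range ≃ Set.range sHom := Equiv.subtypeEquivRight (fun x => by
    simp [MonoidHom.mem_range, Set.mem_range])
  rw [Nat.card_congr (e1.trans (Equiv.ofInjective _ sHom_inj).symm)]
  rw [Nat.card_eq_fintype_card]
  decide

theorem card_PGL : Nat.card PGL27 = 336 := by
  have h1 := Subgroup.card_mul_index Z7
  rw [card_GL7, card_Z7] at h1
  have h2 : Z7.index = Nat.card PGL27 := Subgroup.index_eq_card Z7
  omega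

theorem card_PSL : Nat.card PSLinPGL27 = 168 := by
  have h1 := Subgroup.card_mul_index PSLinPGL27
  rw [card_PGL, psl_index] at h1
  omega

open Pointwise

instance fact2 : Fact (Nat.Prime 2) := ⟨Nat.prime_two⟩

example : Finite PGL27 := inferInstance
example : Finite ↥PSLinPGL27 := inferInstance
example : Finite (Sylow 2 ↥PSLinPGL27) := inferInstance

def Kbig : Subgroup PGL27 where
  carrier := ↑Kset
  one_mem' := Kone
  mul_mem' := fun ha hb => Kmul _ ha _ hb
  inv_mem' := fun ha => Kinv _ ha

def Qbig : Subgroup PGL27 where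
  carrier := ↑Qset
  one_mem' := Qone
  mul_mem' := fun ha hb => Qmul _ ha _ hb
  inv_mem' := fun ha => Qinv _ ha

theorem Kbig_le_psl : Kbig ≤ PSLinPGL27 := by
  intro x hx
  have hx' : x ∈ Kset := hx
  simp only [Kset, Finset.mem_insert, Finset.mem_singleton] at hx'
  rcases hx' with rfl|rfl|rfl|rfl|rfl|rfl|rfl|rfl|rfl|rfl|rfl|rfl|rfl|rfl|rfl|rfl|rfl|rfl|rfl|rfl|rfl|rfl|rfl|rfl
  · exact MonoidHom.mem_range.mpr ⟨sl 0 1 6 1, rfl⟩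
  · exact MonoidHom.mem_range.mpr ⟨sl 0 2 3 6, rfl⟩
  · exact MonoidHom.mem_range.mpr ⟨sl 0 3 2 0, rfl⟩
  · exact MonoidHom.mem_range.mpr ⟨sl 1 0 0 1, rfl⟩
  · exact MonoidHom.mem_range.mpr ⟨sl 1 1 5 6, rfl⟩
  · exact MonoidHom.mem_range.mpr ⟨sl 1 2 3 0, rfl⟩
  · exact MonoidHom.mem_range.mpr ⟨sl 1 3 4 6, rfl⟩
  · exact MonoidHom.mem_range.mpr ⟨sl 1 4 2 2, rfl⟩
  · exact MonoidHom.mem_range.mpr ⟨sl 1 5 6 3, rfl⟩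
  · exact MonoidHom.mem_range.mpr ⟨sl 1 6 1 0, rfl⟩
  · exact MonoidHom.mem_range.mpr ⟨sl 2 0 2 4, rfl⟩
  · exact MonoidHom.mem_range.mpr ⟨sl 2 1 3 2, rfl⟩
  · exact MonoidHom.mem_range.mpr ⟨sl 2 2 1 5, rfl⟩
  · exact MonoidHom.mem_range.mpr ⟨sl 2 3 5 1, rfl⟩
  · exact MonoidHom.mem_range.mpr ⟨sl 2 4 0 4, rfl⟩
  · exact MonoidHom.mem_range.mpr ⟨sl 2 5 6 5, rfl⟩
  · exact MonoidHom.mem_range.mpr ⟨sl 2 6 4 2, rfl⟩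
  · exact MonoidHom.mem_range.mpr ⟨sl 3 0 2 5, rfl⟩
  · exact MonoidHom.mem_range.mpr ⟨sl 3 1 4 4, rfl⟩
  · exact MonoidHom.mem_range.mpr ⟨sl 3 2 1 1, rfl⟩
  · exact MonoidHom.mem_range.mpr ⟨sl 3 3 6 4, rfl⟩
  · exact MonoidHom.mem_range.mpr ⟨sl 3 4 0 5, rfl⟩
  · exact MonoidHom.mem_range.mpr ⟨sl 3 5 5 4, rfl⟩
  · exact MonoidHom.mem_range.mpr ⟨sl 3 6 3 4, rfl⟩

theorem Qbig_le_Kbig : Qbig ≤ Kbig := fun x hx => QsubK x hx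

theorem Qbig_le_psl : Qbig ≤ PSLinPGL27 := le_trans Qbig_le_Kbig Kbig_le_psl

theorem card_Kbig : Nat.card Kbig = 24 := by
  have : Nat.card Kbig = Nat.card (↑Kset : Set PGL27) := rfl
  rw [this, Nat.card_coe_set_eq, Set.ncard_coe_finset, Kcard]

theorem card_Qbig : Nat.card Qbig = 8 := by
  have : Nat.card Qbig = Nat.card (↑Qset : Set PGL27) := rfl
  rw [this, Nat.card_coe_set_eq, Set.ncard_coe_finset, Qcard]

def K0 : Subgroup ↥PSLinPGL27 := Kbig.subgroupOf PSLinPGL27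
def Q0 : Subgroup ↥PSLinPGL27 := Qbig.subgroupOf PSLinPGL27

theorem card_K0 : Nat.card K0 = 24 := by
  rw [K0, Nat.card_congr (Subgroup.subgroupOfEquivOfLe Kbig_le_psl).toEquiv, card_Kbig]

theorem card_Q0 : Nat.card Q0 = 8 := by
  rw [Q0, Nat.card_congr (Subgroup.subgroupOfEquivOfLe Qbig_le_psl).toEquiv, card_Qbig]

theorem Q0_le_K0 : Q0 ≤ K0 :=
  Subgroup.comap_mono (f := PSLinPGL27.subtype) Qbig_le_Kbig

theorem f336 : (336:ℕ).factorization 2 = 4 := by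
  rw [show (336:ℕ) = 2^4*21 by norm_num,
    Nat.factorization_mul (by norm_num) (by norm_num),
    Nat.Prime.factorization_pow Nat.prime_two]
  rw [Finsupp.add_apply, Finsupp.single_eq_same,
    Nat.factorization_eq_zero_of_not_dvd (by norm_num : ¬ 2 ∣ 21)]

theorem f168 : (168:ℕ).factorization 2 = 3 := by
  rw [show (168:ℕ) = 2^3*21 by norm_num,
    Nat.factorization_mul (by norm_num) (by norm_num),
    Nat.Prime.factorization_pow Nat.prime_two]
  rw [Finsupp.add_apply, Finsupp.single_eq_same,
    Nat.factorization_eq_zero_of_not_dvd (by norm_num : ¬ 2 ∣ 21)]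

theorem card_inf (H : Sylow 2 PGL27) :
    Nat.card (((H : Subgroup PGL27) ⊓ PSLinPGL27).subgroupOf PSLinPGL27) = 8 := by
  have cardH : Nat.card (H : Subgroup PGL27) = 16 := by
    rw [H.card_eq_multiplicity, card_PGL, f336]
    norm_num
  have hdvd : PSLinPGL27.relIndex ↑H ∣ 2 := by
    have h0 := Subgroup.relIndex_dvd_index_of_normal PSLinPGL27 (↑H : Subgroup PGL27)
    rwa [psl_index] at h0
  have hne1 : PSLinPGL27.relIndex ↑H ≠ 1 := by
    intro h
    have hle := Subgroup.relIndex_eq_one.mp h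
    have hdd := Subgroup.card_dvd_of_le hle
    rw [cardH, card_PSL] at hdd
    norm_num at hdd
  have h2 : PSLinPGL27.relIndex (↑H) = 2 := by
    rcases (Nat.dvd_prime Nat.prime_two).mp hdvd with h | h
    · exact absurd h hne1
    · exact h
  have hmul := Subgroup.card_mul_index (PSLinPGL27.subgroupOf (H : Subgroup PGL27))
  rw [show (PSLinPGL27.subgroupOf (H : Subgroup PGL27)).index
      = PSLinPGL27.relIndex ↑H from rfl, h2] at hmul
  have hcard16 : Nat.card ((H : Subgroup PGL27) : Type _) = 16 := cardH
  rw [hcard16] at hmul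
  have hc8 : Nat.card (PSLinPGL27.subgroupOf (H : Subgroup PGL27)) = 8 := by omega
  have e1 : Nat.card (((H : Subgroup PGL27) ⊓ PSLinPGL27).subgroupOf PSLinPGL27)
      = Nat.card ((H : Subgroup PGL27) ⊓ PSLinPGL27 : Subgroup PGL27) :=
    Nat.card_congr (Subgroup.subgroupOfEquivOfLe inf_le_right).toEquiv
  have e2 : Nat.card (PSLinPGL27.subgroupOf (H : Subgroup PGL27))
      = Nat.card (PSLinPGL27 ⊓ (H : Subgroup PGL27) : Subgroup PGL27) := by
    rw [← Subgroup.inf_subgroupOf_right]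
    exact Nat.card_congr (Subgroup.subgroupOfEquivOfLe inf_le_right).toEquiv
  rw [e1, inf_comm, ← e2, hc8]

theorem pi23_of_card24 {K : Subgroup ↥PSLinPGL27} (h : Nat.card K = 24) :
    IsPiGroup {2, 3} K := by
  intro p pp pd
  rw [h] at pd
  have hle : p ≤ 24 := Nat.le_of_dvd (by norm_num) pd
  have h2 : 2 ≤ p := pp.two_le
  interval_cases p <;> revert pp pd <;> decide

theorem notmax (H : Sylow 2 PGL27) :
    ¬ IsPiMaximal {2, 3} (((H : Subgroup PGL27) ⊓ PSLinPGL27).subgroupOf PSLinPGL27) := by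
  intro hmax
  set Qs := ((H : Subgroup PGL27) ⊓ PSLinPGL27).subgroupOf PSLinPGL27 with hQsdef
  have h8 : Nat.card Qs = 8 := card_inf H
  have hfac : (Nat.card ↥PSLinPGL27).factorization 2 = 3 := by rw [card_PSL]; exact f168
  let Ps : Sylow 2 ↥PSLinPGL27 := Sylow.ofCard Qs (by rw [h8, hfac]; norm_num)
  let P0 : Sylow 2 ↥PSLinPGL27 := Sylow.ofCard Q0 (by rw [card_Q0, hfac]; norm_num)
  obtain ⟨g, hg⟩ := MulAction.exists_smul_eq ↥PSLinPGL27 P0 Ps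
  have hQs : Qs = MulAut.conj g • Q0 := by
    have hco := congrArg (fun P : Sylow 2 ↥PSLinPGL27 => (P : Subgroup ↥PSLinPGL27)) hg
    simpa [Sylow.coe_subgroup_smul, Ps, P0, Sylow.coe_ofCard] using hco.symm
  set K := MulAut.conj g • K0 with hK
  have hle : Qs ≤ K := by
    rw [hQs, hK]
    exact Subgroup.pointwise_smul_le_pointwise_smul_iff.mpr Q0_le_K0
  have hinj : Function.Injective
      (MulDistribMulAction.toMonoidEnd (MulAut ↥PSLinPGL27) ↥PSLinPGL27 (MulAut.conj g)) :=
    (MulAut.conj g).injective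
  have hcardK : Nat.card K = 24 := by
    rw [hK, Subgroup.pointwise_smul_def,
      ← Nat.card_congr (Subgroup.equivMapOfInjective K0 _ hinj).toEquiv]
    exact card_K0
  have heq := hmax.2 K (pi23_of_card24 hcardK) hle
  rw [heq, h8] at hcardK
  norm_num at hcardK

theorem stmt7' :
    PSLinPGL27.Normal ∧ PSLinPGL27.index = 2 ∧
    ∀ H : Sylow 2 PGL27,
      (∃ Q : Sylow 2 PSLinPGL27,
        (Q : Subgroup PSLinPGL27) = ((H : Subgroup PGL27) ⊓ PSLinPGL27).subgroupOf PSLinPGL27) ∧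
      Nat.card (((H : Subgroup PGL27) ⊓ PSLinPGL27).subgroupOf PSLinPGL27) = 8 ∧
      ¬ IsPiMaximal {2, 3} (((H : Subgroup PGL27) ⊓ PSLinPGL27).subgroupOf PSLinPGL27) := by
  refine ⟨pslNormal, psl_index, fun H => ⟨?_, card_inf H, notmax H⟩⟩
  refine ⟨Sylow.ofCard _ ((card_inf H).trans (by rw [card_PSL, f168]; norm_num)), rfl⟩


/-- `PSL₂(F₇)` is a normal subgroup of index 2 in `PGL₂(F₇)`, and if `H` is a Sylow
`2`-subgroup of `PGL₂(F₇)` then `H ∩ PSL₂(F₇)` is a Sylow `2`-subgroup of `PSL₂(F₇)` of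
order `8` which is not a `{2,3}`-maximal subgroup of `PSL₂(F₇)`. -/
theorem stmt7 :
    PSLinPGL27.Normal ∧ PSLinPGL27.index = 2 ∧
    ∀ H : Sylow 2 PGL27,
      (∃ Q : Sylow 2 PSLinPGL27,
        (Q : Subgroup PSLinPGL27) = ((H : Subgroup PGL27) ⊓ PSLinPGL27).subgroupOf PSLinPGL27) ∧
      Nat.card (((H : Subgroup PGL27) ⊓ PSLinPGL27).subgroupOf PSLinPGL27) = 8 ∧
      ¬ IsPiMaximal {2, 3} (((H : Subgroup PGL27) ⊓ PSLinPGL27).subgroupOf PSLinPGL27) := by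
  exact ⟨pslNormal, psl_index, fun H =>
    ⟨⟨Sylow.ofCard _ ((card_inf H).trans (by rw [card_PSL, f168]; norm_num)), rfl⟩,
      card_inf H, notmax H⟩⟩
end
end

section
/- Let π be a set of primes, G a finite group, H a π-submaximal subgroup of G, and A a subnormal subgroup of G. Then H ∩ A is a π-submaximal subgroup of A. -/
lemma normalIn_map {G H : Type*} [Group G] [Group H] (f : G →* H)
    {A B : Subgroup G} (h : NormalIn A B) : NormalIn (A.map f) (B.map f) := by
  refine ⟨Subgroup.map_mono h.1, ?_⟩
  rintro _ ⟨b, hb, rfl⟩ _ ⟨a, ha, rfl⟩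
  exact ⟨b * a * b⁻¹, h.2 b hb a ha, by simp⟩

/-- If `H` is a `π`-submaximal subgroup of a finite group `G` and `A` is subnormal in `G`,
then `H ∩ A` is a `π`-submaximal subgroup of `A`. -/
theorem stmt10 (π : Set ℕ) {G : Type u} [Group G] [Finite G]
    (H : Subgroup G) (hH : IsPiSubmaximal π H)
    (A : Subgroup G) (hA : IsSubnormal A) :
    IsPiSubmaximal π ((H ⊓ A).subgroupOf A) := by
  obtain ⟨w⟩ := hH
  letI := w.grp
  letI := w.fin
  have hrange : (w.ε.comp A.subtype).range = A.map w.ε := by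
    rw [MonoidHom.range_comp, A.range_subtype]
  refine ⟨⟨w.carrier, w.ε.comp A.subtype, w.inj.comp A.subtype_injective, ?_, w.K, w.maxK, ?_⟩⟩
  · rw [hrange]
    have h1 : Relation.ReflTransGen NormalIn (A.map w.ε) ((⊤ : Subgroup G).map w.ε) :=
      Relation.ReflTransGen.lift (fun B : Subgroup G => B.map w.ε) (fun _ _ h => normalIn_map w.ε h) _ _ hA
    have h2 : ((⊤ : Subgroup G).map w.ε) = w.ε.range := by
      rw [← MonoidHom.range_eq_map]
    rw [h2] at h1
    exact h1.trans w.subnormal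
  · have h3 : ((H ⊓ A).subgroupOf A).map (w.ε.comp A.subtype)
        = (((H ⊓ A).subgroupOf A).map A.subtype).map w.ε := by
      rw [Subgroup.map_map]
    rw [h3, Subgroup.subgroupOf_map_subtype, inf_assoc, inf_idem,
      Subgroup.map_inf H A w.ε w.inj, w.eq, hrange]
    have hle : A.map w.ε ≤ w.ε.range := A.map_le_range w.ε
    rw [inf_comm (w.ε.range ⊓ w.K), ← inf_assoc, inf_of_le_left hle]
end

section
/- Let π, G, V, p, H, G*, K be as in the minimal counterexample setup, let W = ⟨V^g : g ∈ G*⟩ be the normal closure of V in G*, and let G⁰ = N_{G*}(GW) be the normalizer in G* of the subgroup GW. Then there exists a π-maximal subgroup M of G⁰ such that H = M ∩ G. -/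
/-- `M` is a `π`-maximal subgroup of the subgroup `B` of the ambient group:
`M ≤ B`, `M` is a `π`-group, and `M` is maximal among `π`-subgroups of `B`. -/
def IsPiMaximalIn (π : Set ℕ) {G : Type*} [Group G] (B M : Subgroup G) : Prop :=
  M ≤ B ∧ IsPiGroup π M ∧ ∀ K : Subgroup G, K ≤ B → IsPiGroup π K → M ≤ K → K = M

open scoped commutatorElement

section Chains

variable {X : Type*} [Group X]

lemma normalIn_refl (A : Subgroup X) : NormalIn A A :=
  ⟨le_rfl, fun b hb a ha => A.mul_mem (A.mul_mem hb ha) (A.inv_mem hb)⟩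

lemma chain_le {A B : Subgroup X} (h : Relation.ReflTransGen NormalIn A B) : A ≤ B := by
  induction h with
  | refl => exact le_rfl
  | tail _ h2 ih => exact ih.trans h2.1

lemma chain_inf {A B : Subgroup X} (Y : Subgroup X)
    (h : Relation.ReflTransGen NormalIn A B) :
    Relation.ReflTransGen NormalIn (A ⊓ Y) (B ⊓ Y) := by
  induction h with
  | refl => exact Relation.ReflTransGen.refl
  | tail _ h2 ih =>
      refine ih.tail ⟨inf_le_inf_right Y h2.1, ?_⟩
      rintro b ⟨hb1, hb2⟩ a ⟨ha1, ha2⟩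
      exact ⟨h2.2 b hb1 a ha1, Subgroup.mul_mem _ (Subgroup.mul_mem _ hb2 ha2) (inv_mem hb2)⟩

lemma chain_intermediate {A B T : Subgroup X} (h : Relation.ReflTransGen NormalIn A B)
    (hAT : A ≤ T) (hTB : T ≤ B) : Relation.ReflTransGen NormalIn A T := by
  have := chain_inf T h
  rwa [inf_eq_left.mpr hAT, inf_eq_right.mpr hTB] at this

lemma chain_map {Y : Type*} [Group Y] (f : X →* Y) {A B : Subgroup X}
    (h : Relation.ReflTransGen NormalIn A B) :
    Relation.ReflTransGen NormalIn (A.map f) (B.map f) := by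
  induction h with
  | refl => exact Relation.ReflTransGen.refl
  | tail _ h2 ih =>
      refine ih.tail ⟨Subgroup.map_mono h2.1, ?_⟩
      rintro b hb a ha
      rcases Subgroup.mem_map.mp hb with ⟨b0, hb0, rfl⟩
      rcases Subgroup.mem_map.mp ha with ⟨a0, ha0, rfl⟩
      refine Subgroup.mem_map.mpr ⟨b0 * a0 * b0⁻¹, h2.2 b0 hb0 a0 ha0, by simp⟩

/-- a perfect subgroup subnormal in `B` commutes with any subgroup normal in `B`
meeting it trivially. -/
lemma chain_commutator_eq_bot {E B : Subgroup X}
    (hE : Relation.ReflTransGen NormalIn E B) (hperf : ⁅E, E⁆ = E) :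
    ∀ Z : Subgroup X, NormalIn Z B → E ⊓ Z = ⊥ → ⁅E, Z⁆ = ⊥ := by
  induction hE with
  | refl =>
      intro Z hZ hEZ
      have hZbot : Z = ⊥ := by
        rw [← hEZ]; exact le_antisymm (le_inf hZ.1 le_rfl) inf_le_right
      rw [hZbot, Subgroup.commutator_bot_right]
  | @tail Y B' h1 h2 ih =>
      intro Z hZ hEZ
      -- h1 : chain E Y, h2 : NormalIn Y B'
      have hEY : E ≤ Y := chain_le h1
      have hEB : E ≤ B' := hEY.trans h2.1
      -- Z' := Y ⊓ Z  is NormalIn Y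
      have hZ' : NormalIn (Y ⊓ Z) Y := by
        constructor
        · exact inf_le_left
        · rintro y hy a ⟨ha1, ha2⟩
          exact ⟨h2.2 y (h2.1 hy) a ha1, hZ.2 y (h2.1 hy) a ha2⟩
      have hEZ' : E ⊓ (Y ⊓ Z) = ⊥ := by
        rw [eq_bot_iff, ← hEZ]
        exact le_inf inf_le_left (inf_le_right.trans inf_le_right)
      have hcomm' : ⁅E, Y ⊓ Z⁆ = ⊥ := ih (Y ⊓ Z) hZ' hEZ'
      -- ⁅E, Z⁆ ≤ Y ⊓ Z
      have hEZle : ⁅E, Z⁆ ≤ Y ⊓ Z := by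
        rw [Subgroup.commutator_le]
        intro e he z hz
        constructor
        · have h1' : z * e⁻¹ * z⁻¹ ∈ Y := h2.2 z (hZ.1 hz) e⁻¹ (Y.inv_mem (hEY he))
          have : ⁅e, z⁆ = e * (z * e⁻¹ * z⁻¹) := by
            simp [commutatorElement_def, mul_assoc]
          rw [this]
          exact Y.mul_mem (hEY he) h1'
        · have h1' : e * z * e⁻¹ ∈ Z := hZ.2 e (hEB he) z hz
          have : ⁅e, z⁆ = (e * z * e⁻¹) * z⁻¹ := by
            simp [commutatorElement_def, mul_assoc]
          rw [this]
          exact Z.mul_mem h1' (Z.inv_mem hz)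
      -- three subgroups lemma
      have hb1 : ⁅⁅E, Z⁆, E⁆ = ⊥ := by
        rw [eq_bot_iff]
        calc ⁅⁅E, Z⁆, E⁆ ≤ ⁅Y ⊓ Z, E⁆ := Subgroup.commutator_mono hEZle le_rfl
        _ = ⁅E, Y ⊓ Z⁆ := Subgroup.commutator_comm _ _
        _ = ⊥ := hcomm'
      have hb2 : ⁅⁅Z, E⁆, E⁆ = ⊥ := by rwa [Subgroup.commutator_comm Z E]
      have h3 : ⁅⁅E, E⁆, Z⁆ = ⊥ :=
        Subgroup.commutator_commutator_eq_bot_of_rotate hb1 hb2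
      rwa [hperf] at h3

end Chains
section Components

variable {X : Type*} [Group X]

/-- Wielandt: a simple perfect subnormal subgroup is contained in, or commutes with,
any other subnormal subgroup. -/
lemma KS {N B : Subgroup X} (hN : Relation.ReflTransGen NormalIn N B) :
    ∀ E : Subgroup X, Relation.ReflTransGen NormalIn E B →
      (∀ M : Subgroup X, NormalIn M E → M = ⊥ ∨ M = E) → ⁅E, E⁆ = E →
      E ≤ N ∨ ⁅E, N⁆ = ⊥ := by
  induction hN with
  | refl => exact fun E hE _ _ => Or.inl (chain_le hE)
  | @tail Y B' h1 h2 ih =>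
      intro E hE hs1 hperf
      have hEB : E ≤ B' := chain_le hE
      have hdi : E ⊓ Y = ⊥ ∨ E ⊓ Y = E := by
        refine hs1 (E ⊓ Y) ⟨inf_le_left, ?_⟩
        rintro e he a ⟨ha1, ha2⟩
        exact ⟨E.mul_mem (E.mul_mem he ha1) (E.inv_mem he), h2.2 e (hEB he) a ha2⟩
      rcases hdi with hbot | hfull
      · right
        have hcomm : ⁅E, Y⁆ = ⊥ := chain_commutator_eq_bot hE hperf Y h2 hbot
        rw [eq_bot_iff, ← hcomm]
        exact Subgroup.commutator_mono le_rfl (chain_le h1)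
      · have hEY : E ≤ Y := by rw [← hfull]; exact inf_le_right
        exact ih E (chain_intermediate hE hEY h2.1) hs1 hperf

/-- subnormal subgroups of a "simple" subgroup are trivial. -/
lemma SS {A B : Subgroup X} (h : Relation.ReflTransGen NormalIn A B) :
    (∀ M : Subgroup X, NormalIn M B → M = ⊥ ∨ M = B) → A = ⊥ ∨ A = B := by
  induction h with
  | refl => exact fun _ => Or.inr rfl
  | @tail Y B' h1 h2 ih =>
      intro hs1
      rcases hs1 Y h2 with hbot | hfull
      · left
        have := chain_le h1
        rw [hbot, le_bot_iff] at this
        exact this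
      · subst hfull
        exact ih hs1

/-- distinct simple nonabelian subnormal subgroups commute elementwise. -/
lemma COMP {A B : Subgroup X}
    (hA : Relation.ReflTransGen NormalIn A ⊤) (hB : Relation.ReflTransGen NormalIn B ⊤)
    (hs1A : ∀ M : Subgroup X, NormalIn M A → M = ⊥ ∨ M = A) (hperfA : ⁅A, A⁆ = A)
    (hs1B : ∀ M : Subgroup X, NormalIn M B → M = ⊥ ∨ M = B)
    (hAbot : A ≠ ⊥) (hAB : A ≠ B) : ⁅A, B⁆ = ⊥ := by
  rcases KS hB A hA hs1A hperfA with hle | hcomm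
  · rcases SS (chain_intermediate hA hle le_top) hs1B with h | h
    · exact absurd h hAbot
    · exact absurd h hAB
  · exact hcomm

end Components
section PGroupClosure

variable {X : Type*} [Group X] {p : ℕ}

/-- conjugate of a subgroup as `map` of the conjugation automorphism -/
noncomputable abbrev conjS (y : X) (S : Subgroup X) : Subgroup X :=
  S.map (MulAut.conj y).toMonoidHom

lemma mem_conjS {y x : X} {S : Subgroup X} : x ∈ conjS y S ↔ ∃ s ∈ S, x = y * s * y⁻¹ := by
  constructor
  · rintro ⟨s, hs, rfl⟩; exact ⟨s, hs, rfl⟩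
  · rintro ⟨s, hs, rfl⟩; exact ⟨s, hs, rfl⟩

lemma conjS_conjS (y z : X) (S : Subgroup X) : conjS y (conjS z S) = conjS (y * z) S := by
  ext x
  constructor
  · rintro ⟨w, ⟨s, hs, rfl⟩, rfl⟩
    exact mem_conjS.mpr ⟨s, hs, by simp [mul_assoc]⟩
  · rintro ⟨s, hs, rfl⟩
    refine ⟨z * s * z⁻¹, ⟨s, hs, rfl⟩, by simp [mul_assoc]⟩

lemma conjS_sup (y : X) (A B : Subgroup X) : conjS y (A ⊔ B) = conjS y A ⊔ conjS y B :=
  Subgroup.map_sup _ _ _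

lemma conjS_iSup {ι : Sort*} (y : X) (S : ι → Subgroup X) :
    conjS y (⨆ i, S i) = ⨆ i, conjS y (S i) :=
  Subgroup.map_iSup _ _

lemma conjS_one (S : Subgroup X) : conjS 1 S = S := by
  ext x; simp [mem_conjS]

lemma normalIn_le_normalizer {S Y : Subgroup X} (h : NormalIn S Y) :
    ∀ {x : X}, x ∈ Y → x ∈ (Subgroup.normalizer (S : Set _)) := by
  intro x hx
  rw [Subgroup.mem_normalizer_iff]
  intro h'
  constructor
  · exact fun hh => h.2 x hx h' hh
  · intro hh
    have := h.2 x⁻¹ (Y.inv_mem hx) _ hh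
    simpa [mul_assoc] using this

lemma conjS_le_of_normalIn {S Y : Subgroup X} (h : NormalIn S Y) {y : X} (hy : y ∈ Y) :
    conjS y S ≤ S := by
  rintro x ⟨s, hs, rfl⟩
  exact h.2 y hy s hs

/-- a finite family of p-subgroups, each normal in Y, has p-group join, normal in Y. -/
lemma pgroup_normalIn_iSup {ι : Type*} [Finite ι] (f : ι → Subgroup X) (Y : Subgroup X)
    (hn : ∀ i, NormalIn (f i) Y) (hp : ∀ i, IsPGroup p (f i)) :
    IsPGroup p ((⨆ i, f i : Subgroup X)) ∧ NormalIn (⨆ i, f i) Y := by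
  classical
  have := Fintype.ofFinite ι
  have hsup : (⨆ i, f i : Subgroup X) = (Finset.univ : Finset ι).sup f := by
    apply le_antisymm
    · exact iSup_le fun i => Finset.le_sup (Finset.mem_univ i)
    · exact Finset.sup_le fun i _ => le_iSup f i
  rw [hsup]
  have main : ∀ s : Finset ι, IsPGroup p ((s.sup f : Subgroup X)) ∧ NormalIn (s.sup f) Y := by
    intro s
    induction s using Finset.induction_on with
    | empty =>
        refine ⟨by rw [Finset.sup_empty]; exact IsPGroup.of_bot, ?_⟩
        constructor
        · simp
        · intro b _ a ha
          simp only [Finset.sup_empty, Subgroup.mem_bot] at ha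
          simp [ha]
    | @insert a s ha ih =>
        rw [Finset.sup_insert]
        constructor
        · refine IsPGroup.to_sup_of_normal_right' (hp a) ih.1 ?_
          intro x hx
          exact normalIn_le_normalizer ih.2 ((hn a).1 hx)
        · constructor
          · exact sup_le (hn a).1 ih.2.1
          · intro b hb x hx
            have : conjS b (f a ⊔ s.sup f) ≤ f a ⊔ s.sup f := by
              rw [conjS_sup]
              exact sup_le ((conjS_le_of_normalIn (hn a) hb).trans le_sup_left)
                ((conjS_le_of_normalIn ih.2 hb).trans le_sup_right)
            exact this ⟨x, hx, rfl⟩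
  exact main Finset.univ

/-- Wielandt: the subnormal closure machinery. If A is subnormal in B and a p-group,
there is a p-group P with A ≤ P and P normal in B. -/
lemma wielandt_closure {A B : Subgroup X} [Finite X] (h : Relation.ReflTransGen NormalIn A B)
    (hA : IsPGroup p A) : ∃ P : Subgroup X, A ≤ P ∧ NormalIn P B ∧ IsPGroup p P := by
  induction h with
  | refl => exact ⟨A, le_rfl, normalIn_refl A, hA⟩
  | @tail Y B' h1 h2 ih =>
      obtain ⟨P₀, hAP₀, hP₀Y, hP₀p⟩ := ih
      set f : ↥B' → Subgroup X := fun b => conjS (b : X) P₀ with hf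
      have hfn : ∀ b : ↥B', NormalIn (f b) Y := by
        intro b
        constructor
        · rintro x ⟨s, hs, rfl⟩
          have hb : (b : X) ∈ B' := b.2
          -- b s b⁻¹ ∈ Y since s ∈ Y and Y normal in B'
          exact h2.2 (b : X) hb s (hP₀Y.1 hs)
        · intro y hy x hx
          rcases mem_conjS.mp hx with ⟨s, hs, rfl⟩
          have hyB : y ∈ B' := h2.1 hy
          have hb : (b : X) ∈ B' := b.2
          have hinner : (b : X)⁻¹ * y * (b : X) ∈ Y := by
            have := h2.2 ((b : X)⁻¹) (B'.inv_mem hb) y hy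
            simpa [mul_assoc] using this
          have hmem : ((b : X)⁻¹ * y * (b : X)) * s * ((b : X)⁻¹ * y * (b : X))⁻¹ ∈ P₀ :=
            hP₀Y.2 _ hinner s hs
          refine mem_conjS.mpr ⟨_, hmem, ?_⟩
          group
      have hfp : ∀ b : ↥B', IsPGroup p (f b) := fun b => hP₀p.map _
      obtain ⟨hPp, hPY⟩ := pgroup_normalIn_iSup f Y hfn hfp
      refine ⟨⨆ b, f b, ?_, ⟨hPY.1.trans h2.1, ?_⟩, hPp⟩
      · have h1' : A ≤ f ⟨1, B'.one_mem⟩ := by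
          intro a ha
          exact mem_conjS.mpr ⟨a, hAP₀ ha, by simp⟩
        exact h1'.trans (le_iSup f ⟨1, B'.one_mem⟩)
      · intro b hb x hx
        have : conjS b (⨆ i, f i) ≤ ⨆ i, f i := by
          rw [conjS_iSup]
          refine iSup_le fun i => ?_
          have : conjS b (f i) = f (⟨b, hb⟩ * i) := by
            simp only [hf]
            rw [conjS_conjS]
            rfl
          rw [this]
          exact le_iSup f _
        exact this ⟨x, hx, rfl⟩

end PGroupClosure
section PiGroups

variable {X : Type*} [Group X] {π : Set ℕ}

lemma isPiGroup_of_le {A B : Subgroup X} (h : A ≤ B) (hB : IsPiGroup π B) : IsPiGroup π A :=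
  fun q hq hdvd => hB q hq (hdvd.trans (Subgroup.card_dvd_of_le h))

lemma mem_sup_of_normalizer {A B : Subgroup X} (hn : A ≤ (Subgroup.normalizer (B : Set _))) {x : X} :
    x ∈ A ⊔ B ↔ ∃ a ∈ A, ∃ b ∈ B, x = a * b := by
  constructor
  · intro hx
    let T : Subgroup X :=
      { carrier := {x | ∃ a ∈ A, ∃ b ∈ B, x = a * b}
        one_mem' := ⟨1, A.one_mem, 1, B.one_mem, by simp⟩
        mul_mem' := by
          rintro x y ⟨a, ha, b, hb, rfl⟩ ⟨a', ha', b', hb', rfl⟩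
          refine ⟨a * a', A.mul_mem ha ha', (a'⁻¹ * b * a') * b', B.mul_mem ?_ hb', by group⟩
          have h2 := (Subgroup.mem_normalizer_iff.mp (hn (A.inv_mem ha')) b).mp hb
          simpa [mul_assoc] using h2
        inv_mem' := by
          rintro x ⟨a, ha, b, hb, rfl⟩
          refine ⟨a⁻¹, A.inv_mem ha, a * b⁻¹ * a⁻¹, ?_, by group⟩
          exact (Subgroup.mem_normalizer_iff.mp (hn ha) b⁻¹).mp (B.inv_mem hb) }
    have hT : A ⊔ B ≤ T := by
      refine sup_le ?_ ?_
      · intro a ha; exact ⟨a, ha, 1, B.one_mem, by simp⟩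
      · intro b hb; exact ⟨1, A.one_mem, b, hb, by simp⟩
    exact hT hx
  · rintro ⟨a, ha, b, hb, rfl⟩
    exact Subgroup.mul_mem _ (Subgroup.mem_sup_left ha) (Subgroup.mem_sup_right hb)

lemma card_sup_dvd [Finite X] {A B : Subgroup X} (hn : A ≤ (Subgroup.normalizer (B : Set _))) :
    Nat.card (A ⊔ B : Subgroup X) ∣ Nat.card A * Nat.card B := by
  classical
  set S := A ⊔ B with hS
  have hBS : B ≤ S := le_sup_right
  have hAS : A ≤ S := le_sup_left
  have hSn : S ≤ (Subgroup.normalizer (B : Set _)) := sup_le hn B.le_normalizer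
  have hnormal : (B.subgroupOf S).Normal := by
    rw [Subgroup.normal_subgroupOf_iff hBS]
    intro h k hh hk
    exact (Subgroup.mem_normalizer_iff.mp (hSn hk) h).mp hh
  have hcards : Nat.card S = Nat.card (↥S ⧸ B.subgroupOf S) * Nat.card (B.subgroupOf S) :=
    Subgroup.card_eq_card_quotient_mul_card_subgroup _
  have hcardB : Nat.card (B.subgroupOf S) = Nat.card B :=
    Nat.card_congr (Subgroup.subgroupOfEquivOfLe hBS).toEquiv
  have hsurj : Function.Surjective
      ((QuotientGroup.mk' (B.subgroupOf S)).comp (Subgroup.inclusion hAS)) := by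
    intro y
    obtain ⟨x, rfl⟩ := QuotientGroup.mk'_surjective (B.subgroupOf S) y
    obtain ⟨a, ha, b, hb, hab⟩ := (mem_sup_of_normalizer hn).mp x.2
    refine ⟨⟨a, ha⟩, ?_⟩
    simp only [MonoidHom.comp_apply, QuotientGroup.mk'_apply]
    refine (QuotientGroup.eq).mpr ?_
    show ((Subgroup.inclusion hAS ⟨a, ha⟩ : ↥S) : X)⁻¹ * (x : X) ∈ B
    have : ((Subgroup.inclusion hAS ⟨a, ha⟩ : ↥S) : X) = a := rfl
    rw [this, hab]
    simpa [mul_assoc] using hb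
  have hq : Nat.card (↥S ⧸ B.subgroupOf S) ∣ Nat.card A :=
    Subgroup.card_dvd_of_surjective _ hsurj
  rw [hcards, hcardB]
  exact Nat.mul_dvd_mul hq dvd_rfl

lemma isPiGroup_sup [Finite X] {A B : Subgroup X} (hn : A ≤ (Subgroup.normalizer (B : Set _)))
    (hA : IsPiGroup π A) (hB : IsPiGroup π B) : IsPiGroup π (A ⊔ B) := by
  intro q hq hdvd
  rcases (Nat.Prime.dvd_mul hq).mp (hdvd.trans (card_sup_dvd hn)) with h | h
  · exact hA q hq h
  · exact hB q hq h

/-- if `N ≤ L`, `N` normal and π, and the image of `L` mod `N` is π, then `L` is π. -/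
lemma isPiGroup_of_quotient [Finite X] {N L : Subgroup X} [N.Normal] (hNL : N ≤ L)
    (hN : IsPiGroup π N) (hQ : IsPiGroup π (L.map (QuotientGroup.mk' N))) :
    IsPiGroup π L := by
  classical
  have hcards : Nat.card L = Nat.card (↥L ⧸ N.subgroupOf L) * Nat.card (N.subgroupOf L) :=
    Subgroup.card_eq_card_quotient_mul_card_subgroup _
  have hcardN : Nat.card (N.subgroupOf L) = Nat.card N :=
    Nat.card_congr (Subgroup.subgroupOfEquivOfLe hNL).toEquiv
  -- ↥L ⧸ N.subgroupOf L ≃* image of L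
  have hker : ((QuotientGroup.mk' N).comp L.subtype).ker = N.subgroupOf L := by
    ext x
    simp [MonoidHom.mem_ker, QuotientGroup.eq_one_iff, Subgroup.mem_subgroupOf]
  have hrange : ((QuotientGroup.mk' N).comp L.subtype).range = L.map (QuotientGroup.mk' N) := by
    rw [MonoidHom.range_comp, Subgroup.range_subtype]
  have hcardQ : Nat.card (↥L ⧸ N.subgroupOf L) = Nat.card (L.map (QuotientGroup.mk' N)) := by
    rw [← hker, ← hrange]
    exact Nat.card_congr (QuotientGroup.quotientKerEquivRange _).toEquiv
  intro q hq hdvd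
  rw [hcards, hcardQ, hcardN] at hdvd
  rcases (Nat.Prime.dvd_mul hq).mp hdvd with h | h
  · exact hQ q hq h
  · exact hN q hq h

lemma isPiGroup_map {Y : Type*} [Group Y] (f : X →* Y) {A : Subgroup X}
    (hA : IsPiGroup π A) : IsPiGroup π (A.map f) := by
  intro q hq hdvd
  refine hA q hq (hdvd.trans ?_)
  exact Subgroup.card_dvd_of_surjective (f.subgroupMap A) (f.subgroupMap_surjective A)

lemma isPiGroup_pGroup {p : ℕ} (hp : p.Prime) (hpπ : p ∈ π) {A : Subgroup X} [Finite X]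
    (hA : IsPGroup p A) : IsPiGroup π A := by
  intro q hq hdvd
  haveI : Fact q.Prime := ⟨hq⟩
  obtain ⟨g, hg⟩ := exists_prime_orderOf_dvd_card' (G := ↥A) q hdvd
  obtain ⟨k, hk⟩ := hA g
  have : orderOf g ∣ p ^ k := orderOf_dvd_of_pow_eq_one hk
  rw [hg] at this
  rcases (Nat.Prime.dvd_of_dvd_pow hq this) with h
  have : q = p := (Nat.prime_dvd_prime_iff_eq hq hp).mp h
  rwa [this]

end PiGroups
section MaxEx

variable {X : Type*} [Group X] {π : Set ℕ}

lemma exists_piMaximalIn [Finite X] (B L : Subgroup X) (hLB : L ≤ B) (hL : IsPiGroup π L) :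
    ∃ M : Subgroup X, L ≤ M ∧ M ≤ B ∧ IsPiGroup π M ∧
      ∀ K : Subgroup X, K ≤ B → IsPiGroup π K → M ≤ K → K = M := by
  haveI : Finite (Subgroup X) := Finite.of_injective _ SetLike.coe_injective
  set s : Set (Subgroup X) := {M | L ≤ M ∧ M ≤ B ∧ IsPiGroup π M} with hs
  have hsne : s.Nonempty := ⟨L, le_rfl, hLB, hL⟩
  obtain ⟨M, hM, hmax⟩ :=
    Set.Finite.exists_maximalFor (fun M : Subgroup X => Nat.card M) s (Set.toFinite s) hsne
  refine ⟨M, hM.1, hM.2.1, hM.2.2, ?_⟩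
  intro K hKB hKpi hMK
  have hKs : K ∈ s := ⟨hM.1.trans hMK, hKB, hKpi⟩
  have hcard := le_antisymm (Subgroup.card_le_of_le hMK) (hmax hKs (Subgroup.card_le_of_le hMK))
  exact (Subgroup.eq_of_le_of_card_ge hMK (le_of_eq hcard.symm)).symm

end MaxEx
section ConjTransport

variable {Y : Type*} [Group Y] {π : Set ℕ}

lemma conjS_inv_cancel (g : Y) (S : Subgroup Y) : conjS g (conjS g⁻¹ S) = S := by
  rw [conjS_conjS, mul_inv_cancel, conjS_one]

lemma conjS_bot (g : Y) : conjS g (⊥ : Subgroup Y) = ⊥ := by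
  ext x; simp [mem_conjS]

lemma mem_normalizer_of_conjS_eq {g : Y} {S : Subgroup Y} (h : conjS g S = S) :
    g ∈ (Subgroup.normalizer (S : Set _)) := by
  rw [Subgroup.mem_normalizer_iff]
  intro s
  constructor
  · intro hs
    have : g * s * g⁻¹ ∈ conjS g S := mem_conjS.mpr ⟨s, hs, rfl⟩
    rwa [h] at this
  · intro hs
    have : g * s * g⁻¹ ∈ conjS g S := h.symm ▸ hs
    rcases mem_conjS.mp this with ⟨t, ht, heq⟩
    have h1 : g * s = g * t := mul_right_cancel heq
    have : s = t := mul_left_cancel h1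
    rwa [this]

lemma conjS_eq_of_mem_normalizer {g : Y} {S : Subgroup Y} (h : g ∈ (Subgroup.normalizer (S : Set _))) :
    conjS g S = S := by
  ext x
  rw [Subgroup.mem_normalizer_iff] at h
  constructor
  · rintro ⟨s, hs, rfl⟩
    exact (h s).mp hs
  · intro hx
    refine mem_conjS.mpr ⟨g⁻¹ * x * g, ?_, by group⟩
    have := (h (g⁻¹ * x * g)).mpr
    simp only [mul_assoc] at this ⊢
    refine this ?_
    simpa [mul_assoc] using hx

lemma chain_conj (g : Y) {A : Subgroup Y} (h : Relation.ReflTransGen NormalIn A ⊤) :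
    Relation.ReflTransGen NormalIn (conjS g A) ⊤ := by
  have := chain_map (MulAut.conj g).toMonoidHom h
  rwa [Subgroup.map_top_of_surjective _ (MulAut.conj g).surjective] at this

lemma s1_conj (g : Y) {A : Subgroup Y}
    (hs1 : ∀ M : Subgroup Y, NormalIn M A → M = ⊥ ∨ M = A) :
    ∀ M : Subgroup Y, NormalIn M (conjS g A) → M = ⊥ ∨ M = conjS g A := by
  intro Mx hMx
  have hback : NormalIn (conjS g⁻¹ Mx) A := by
    constructor
    · rintro x ⟨m, hm, rfl⟩
      rcases mem_conjS.mp (hMx.1 hm) with ⟨a, ha, rfl⟩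
      have : (MulAut.conj g⁻¹).toMonoidHom (g * a * g⁻¹) = a := by
        simp [mul_assoc]
      rw [this]
      exact ha
    · intro a ha m hm
      rcases mem_conjS.mp hm with ⟨m₀, hm₀, rfl⟩
      have hga : g * a * g⁻¹ ∈ conjS g A := mem_conjS.mpr ⟨a, ha, rfl⟩
      have hinner := hMx.2 _ hga m₀ hm₀
      refine mem_conjS.mpr ⟨_, hinner, ?_⟩
      group
  rcases hs1 _ hback with hbot | hfull
  · left
    have : Mx = conjS g (conjS g⁻¹ Mx) := (conjS_inv_cancel g Mx).symm
    rw [this, hbot, conjS_bot]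
  · right
    have : Mx = conjS g (conjS g⁻¹ Mx) := (conjS_inv_cancel g Mx).symm
    rw [this, hfull]

lemma perf_conj (g : Y) {A : Subgroup Y} (h : ⁅A, A⁆ = A) :
    ⁅conjS g A, conjS g A⁆ = conjS g A := by
  have := Subgroup.map_commutator (f := (MulAut.conj g).toMonoidHom) (H₁ := A) (H₂ := A)
  rw [h] at this
  exact this.symm

lemma conjS_ne_bot (g : Y) {A : Subgroup Y} (h : A ≠ ⊥) : conjS g A ≠ ⊥ := by
  intro hc
  apply h
  have := congrArg (conjS g⁻¹) hc
  rwa [show conjS g⁻¹ (conjS g A) = A by rw [conjS_conjS]; simp [conjS_one], conjS_bot] at this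

lemma isPiGroup_finsetSup [Finite Y] (s : Finset (Subgroup Y))
    (h1 : ∀ A ∈ s, IsPiGroup π A)
    (h2 : ∀ A ∈ s, ∀ B ∈ s, A ≠ B → A ≤ Subgroup.centralizer B) :
    IsPiGroup π (s.sup id) := by
  classical
  induction s using Finset.induction_on with
  | empty =>
      intro q hq hdvd
      rw [Finset.sup_empty, Subgroup.card_bot, Nat.dvd_one] at hdvd
      exact absurd hdvd hq.ne_one
  | @insert A t hA ih =>
      rw [Finset.sup_insert]
      have hrest : IsPiGroup π (t.sup id) :=
        ih (fun B hB => h1 B (Finset.mem_insert_of_mem hB))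
          (fun B hB C hC hBC =>
            h2 B (Finset.mem_insert_of_mem hB) C (Finset.mem_insert_of_mem hC) hBC)
      refine isPiGroup_sup ?_ (h1 A (Finset.mem_insert_self A t)) hrest
      intro a ha
      have hcent : (t.sup id : Subgroup Y) ≤ Subgroup.centralizer A := by
        refine Finset.sup_le fun B hB => ?_
        have hBA : B ≠ A := fun h => hA (h ▸ hB)
        exact h2 B (Finset.mem_insert_of_mem hB) A (Finset.mem_insert_self A t) hBA
      rw [Subgroup.mem_normalizer_iff]
      intro x
      constructor
      · intro hx
        have hcomm := (Subgroup.mem_centralizer_iff.mp (hcent hx)) a ha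
        have : a * x * a⁻¹ = x := by
          rw [hcomm]; group
        rwa [this]
      · intro hx
        have hcomm := (Subgroup.mem_centralizer_iff.mp (hcent hx)) a ha
        -- hcomm : a * (a * x * a⁻¹) = (a * x * a⁻¹) * a
        have : a * x * a⁻¹ = x := by
          have h' : a * (a * x * a⁻¹) = a * x := by rw [hcomm]; group
          exact mul_left_cancel h'
        rwa [← this]

end ConjTransport
section ChainSup

variable {Y : Type*} [Group Y]

lemma le_normalizer_of_normal' {W : Subgroup Y} (hW : W.Normal) (A : Subgroup Y) :
    A ≤ (Subgroup.normalizer (W : Set _)) := by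
  intro x _
  rw [Subgroup.mem_normalizer_iff]
  intro h
  exact ⟨fun hh => hW.conj_mem h hh x, fun hh => by
    have := hW.conj_mem _ hh x⁻¹
    simpa [mul_assoc] using this⟩

lemma chain_sup_normal {W : Subgroup Y} (hW : W.Normal) {A B : Subgroup Y}
    (h : Relation.ReflTransGen NormalIn A B) :
    Relation.ReflTransGen NormalIn (A ⊔ W) (B ⊔ W) := by
  induction h with
  | refl => exact Relation.ReflTransGen.refl
  | @tail Y' B' h1 h2 ih =>
      refine ih.tail ⟨sup_le_sup_right h2.1 W, ?_⟩
      intro b hb a ha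
      rcases (mem_sup_of_normalizer (le_normalizer_of_normal' hW B')).mp hb with
        ⟨b₀, hb₀, w₀, hw₀, rfl⟩
      rcases (mem_sup_of_normalizer (le_normalizer_of_normal' hW Y')).mp ha with
        ⟨a₀, ha₀, w₁, hw₁, rfl⟩
      have hkey : b₀ * w₀ * (a₀ * w₁) * (b₀ * w₀)⁻¹
          = (b₀ * a₀ * b₀⁻¹) * ((b₀ * (a₀⁻¹ * w₀ * a₀ * w₁ * w₀⁻¹) * b₀⁻¹)) := by
        group
      rw [hkey]
      refine Subgroup.mul_mem _ (Subgroup.mem_sup_left (h2.2 b₀ hb₀ a₀ ha₀))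
        (Subgroup.mem_sup_right ?_)
      refine hW.conj_mem _ ?_ b₀
      refine W.mul_mem (W.mul_mem ?_ hw₁) (W.inv_mem hw₀)
      have := hW.conj_mem _ hw₀ a₀⁻¹
      simpa [mul_assoc] using this

end ChainSup
/-- In the minimal counterexample setup, with `W` the normal closure of (the image of)
`V` in `G*` and `G⁰ = N_{G*}(GW)`, there is a `π`-maximal subgroup `M` of `G⁰`
with `H = M ∩ G`. -/
theorem stmt18 {G : Type} [Group G] [Finite G] (π : Set ℕ) (p : ℕ)
    (hp : p.Prime) (hpπ : p ∈ π)
    (V : Subgroup G) [nV : V.Normal]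
    (hVmin : IsMinimalNormal V)
    (hVuniq : ∀ U : Subgroup G, IsMinimalNormal U → U = V)
    (hVp : IsPGroup p V)
    (hVZ : ¬ V ≤ Subgroup.center G)
    (hsimple : IsSimpleGroup (G ⧸ V))
    (hnonab : ∃ a b : G ⧸ V, a * b ≠ b * a)
    (H : Subgroup G) (hH : IsPiSubmaximal π H)
    (Gstar : Type) [Group Gstar] [Finite Gstar]
    (ε : G →* Gstar) (hinj : Function.Injective ε) (hsub : IsSubnormal ε.range)
    (K : Subgroup Gstar) (hK : IsPiMaximal π K) (heq : H.map ε = ε.range ⊓ K)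
    (hmin : ∀ w : PiSubmaximalWitness π G H, Nat.card Gstar ≤ Nat.card w.carrier) :
    ∀ W : Subgroup Gstar,
      W = Subgroup.normalClosure ((V.map ε : Subgroup Gstar) : Set Gstar) →
      ∃ M : Subgroup Gstar,
        IsPiMaximalIn π (Subgroup.normalizer ((ε.range ⊔ W : Subgroup Gstar) : Set Gstar)) M ∧ H.map ε = ε.range ⊓ M := by
  intro W hW
  classical
  haveI : Fact p.Prime := ⟨hp⟩
  haveI hWn : W.Normal := by rw [hW]; exact Subgroup.normalClosure_normal
  -- basic: Vε
  set Vε : Subgroup Gstar := V.map ε with hVε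
  have hVεr : Vε ≤ ε.range := by
    rintro x ⟨v, hv, rfl⟩; exact ⟨v, rfl⟩
  have hVεn : NormalIn Vε ε.range := by
    refine ⟨hVεr, ?_⟩
    rintro b ⟨g, rfl⟩ a ⟨v, hv, rfl⟩
    exact ⟨g * v * g⁻¹, nV.conj_mem v hv g, by simp [map_mul]⟩
  have hVεchain : Relation.ReflTransGen NormalIn Vε ⊤ :=
    Relation.ReflTransGen.head hVεn hsub
  have hVεp : IsPGroup p Vε := hVp.map ε
  have hVεW : Vε ≤ W := by rw [hW]; exact Subgroup.le_normalClosure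
  -- W is a p-group
  have hWp : IsPGroup p W := by
    obtain ⟨P, hVP, hPtop, hPp⟩ := wielandt_closure hVεchain hVεp
    haveI hPnormal : P.Normal := ⟨fun n hn g => hPtop.2 g trivial n hn⟩
    have hWP : W ≤ P := by
      rw [hW]
      exact Subgroup.normalClosure_le_normal hVP
    exact hPp.to_le hWP
  have hWpi : IsPiGroup π W := isPiGroup_pGroup hp hpπ hWp
  -- W ≤ K
  have hKW : W ≤ K := by
    have hKn : K ≤ (Subgroup.normalizer (W : Set _)) := le_normalizer_of_normal' hWn K
    have hpi : IsPiGroup π (K ⊔ W) := isPiGroup_sup hKn hK.1 hWpi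
    have hKsup := hK.2 (K ⊔ W) hpi le_sup_left
    rw [← hKsup]; exact le_sup_right
  set Hε : Subgroup Gstar := H.map ε with hHε
  have hHεK : Hε ≤ K := heq.le.trans inf_le_right
  have hHεr : Hε ≤ ε.range := heq.le.trans inf_le_left
  have hVεHε : Vε ≤ Hε := by rw [heq]; exact le_inf hVεr (hVεW.trans hKW)
  -- comap classification : W.comap ε = V
  have hWc : W.comap ε = V := by
    have hWcn : (W.comap ε).Normal := hWn.comap ε
    have hVWc : V ≤ W.comap ε := fun v hv => hVεW ⟨v, hv, rfl⟩
    haveI : ((W.comap ε).map (QuotientGroup.mk' V)).Normal :=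
      Subgroup.Normal.map hWcn _ (QuotientGroup.mk'_surjective V)
    rcases hsimple.eq_bot_or_eq_top_of_normal ((W.comap ε).map (QuotientGroup.mk' V)) inferInstance with hbot | htop
    · rw [Subgroup.map_eq_bot_iff, QuotientGroup.ker_mk'] at hbot
      exact le_antisymm hbot hVWc
    · exfalso
      -- then W.comap ε = ⊤, so range ≤ W, so G is a p-group; contradiction
      have hWctop : W.comap ε = ⊤ := by
        rw [eq_top_iff]
        intro g _
        have : (QuotientGroup.mk' V) g ∈ ((W.comap ε).map (QuotientGroup.mk' V)) := by
          rw [htop]; trivial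
        rcases this with ⟨w, hw, hwg⟩
        have : w⁻¹ * g ∈ V := by
          rw [QuotientGroup.mk'_eq_mk'] at hwg
          rcases hwg with ⟨z, hz, rfl⟩
          simpa using hz
        have : g = w * (w⁻¹ * g) := by group
        rw [this]
        exact Subgroup.mul_mem _ hw (hVWc ‹w⁻¹ * g ∈ V›)
      have hrW : ε.range ≤ W := by
        rintro x ⟨g, rfl⟩
        have : g ∈ W.comap ε := by rw [hWctop]; trivial
        exact this
      have hGp : IsPGroup p G := by
        have h1 : IsPGroup p ε.range := hWp.to_le hrW
        intro g
        obtain ⟨k, hk⟩ := h1 ⟨ε g, g, rfl⟩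
        refine ⟨k, hinj ?_⟩
        have h2 : ((⟨ε g, g, rfl⟩ : ε.range) ^ p ^ k : Gstar) = ((1 : ε.range) : Gstar) := by
          exact_mod_cast congrArg (Subtype.val) hk
        simpa [map_pow] using h2
      have hQp : IsPGroup p (G ⧸ V) :=
        hGp.of_surjective (QuotientGroup.mk' V) (QuotientGroup.mk'_surjective V)
      obtain ⟨a, b, hab⟩ := hnonab
      haveI : Nontrivial (G ⧸ V) := ⟨⟨a * b, b * a, hab⟩⟩
      haveI : Finite (G ⧸ V) := Quotient.finite _
      have hcnt := hQp.center_nontrivial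
      rcases hsimple.eq_bot_or_eq_top_of_normal (Subgroup.center (G ⧸ V)) inferInstance with hcb | hct
      · rw [hcb] at hcnt
        exact (not_nontrivial _) hcnt
      · apply hab
        have hbmem : b ∈ Subgroup.center (G ⧸ V) := by rw [hct]; trivial
        exact (Subgroup.mem_center_iff.mp hbmem) a
  -- W ⊓ range = Vε
  have hWr : W ⊓ ε.range = Vε := by
    apply le_antisymm
    · intro x hx
      rw [Subgroup.mem_inf] at hx
      obtain ⟨hxW, g, rfl⟩ := hx
      have : g ∈ W.comap ε := hxW
      rw [hWc] at this
      exact ⟨g, this, rfl⟩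
    · exact le_inf hVεW hVεr
  -- GW and G0
  set GW : Subgroup Gstar := ε.range ⊔ W with hGW
  set G0 : Subgroup Gstar := (Subgroup.normalizer (GW : Set _)) with hG0
  have hrWn : ε.range ≤ (Subgroup.normalizer (W : Set _)) := le_normalizer_of_normal' hWn _
  have hmemGW : ∀ {x : Gstar}, x ∈ GW ↔ ∃ a ∈ ε.range, ∃ w ∈ W, x = a * w :=
    fun {x} => mem_sup_of_normalizer hrWn
  have hrG0 : ε.range ≤ G0 := by
    intro x hx
    rw [Subgroup.mem_normalizer_iff]
    intro h
    constructor
    · intro hh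
      rcases hmemGW.mp hh with ⟨a, ha, w, hw, rfl⟩
      refine hmemGW.mpr ⟨x * a * x⁻¹, ?_, x * w * x⁻¹, hWn.conj_mem w hw x, by group⟩
      rcases hx with ⟨g, rfl⟩; rcases ha with ⟨g', rfl⟩
      exact ⟨g * g' * g⁻¹, by simp [map_mul]⟩
    · intro hh
      rcases hmemGW.mp hh with ⟨a, ha, w, hw, habw⟩
      have hxinv : h = x⁻¹ * (a * w) * x := by
        rw [← habw]; group
      rw [hxinv]
      have h1 : x⁻¹ * a * x ∈ ε.range := by
        rcases hx with ⟨g, rfl⟩; rcases ha with ⟨g', rfl⟩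
        exact ⟨g⁻¹ * g' * g, by simp [map_mul]⟩
      have h2 : x⁻¹ * w * x ∈ W := by
        have := hWn.conj_mem w hw x⁻¹
        simpa [mul_assoc] using this
      refine hmemGW.mpr ⟨x⁻¹ * a * x, h1, x⁻¹ * w * x, h2, by group⟩
  have hWGW : W ≤ GW := le_sup_right
  have hWG0 : W ≤ G0 := hWGW.trans Subgroup.le_normalizer
  -- choose M
  obtain ⟨M, hKG0M, hMG0, hMpi, hMmax⟩ :=
    exists_piMaximalIn (π := π) G0 (K ⊓ G0) inf_le_right (isPiGroup_of_le inf_le_left hK.1)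
  have hWM : W ≤ M := (le_inf hKW hWG0).trans hKG0M
  have hHεG0 : Hε ≤ G0 := hHεr.trans hrG0
  have hHεM : Hε ≤ M := (le_inf hHεK hHεG0).trans hKG0M
  refine ⟨M, ⟨hMG0, hMpi, hMmax⟩, ?_⟩
  -- it remains to show Hε = range ⊓ M, and ⊇ is the hard part
  refine le_antisymm (le_inf hHεr hHεM) ?_
  -- quotient setup
  set mk : Gstar →* Gstar ⧸ W := QuotientGroup.mk' W with hmk
  have hmksurj : Function.Surjective mk := QuotientGroup.mk'_surjective W
  have hmkker : ∀ {x : Gstar}, mk x = 1 ↔ x ∈ W := fun {x} => QuotientGroup.eq_one_iff x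
  set Eb : Subgroup (Gstar ⧸ W) := GW.map mk with hEb
  have hEbr : Eb = (ε.range).map mk := by
    rw [hEb, hGW, Subgroup.map_sup]
    have : W.map mk = ⊥ := by
      rw [Subgroup.map_eq_bot_iff, hmk, QuotientGroup.ker_mk']
    rw [this, sup_bot_eq]
  set Kb : Subgroup (Gstar ⧸ W) := K.map mk with hKb
  set Hb : Subgroup (Gstar ⧸ W) := Hε.map mk with hHb
  -- mk equality lemma
  have hmkeq : ∀ {x y : Gstar}, mk x = mk y ↔ ∃ w ∈ W, x * w = y := by
    intro x y
    rw [hmk, QuotientGroup.mk'_eq_mk']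
  -- Kb ⊓ Eb = Hb
  have hKbEb : Kb ⊓ Eb = Hb := by
    apply le_antisymm
    · intro xb hxb
      rw [Subgroup.mem_inf] at hxb
      obtain ⟨hxK, hxE⟩ := hxb
      obtain ⟨k, hk, hkx⟩ := hxK
      rw [hEbr] at hxE
      obtain ⟨g, hg, hgx⟩ := hxE
      have : mk k = mk g := by rw [hkx, hgx]
      obtain ⟨w, hw, hwk⟩ := hmkeq.mp this
      have hgK : g ∈ K := by rw [← hwk]; exact K.mul_mem hk (hKW hw)
      have hgHε : g ∈ Hε := by rw [heq]; exact ⟨hg, hgK⟩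
      exact ⟨g, hgHε, hgx⟩
    · refine le_inf (Subgroup.map_mono hHεK) ?_
      rw [hEbr]
      exact Subgroup.map_mono hHεr
  -- Kb is a maximal π-subgroup of the quotient
  have hKbpi : IsPiGroup π Kb := isPiGroup_map mk hK.1
  have hKbmax : ∀ Lb : Subgroup (Gstar ⧸ W), IsPiGroup π Lb → Kb ≤ Lb → Lb = Kb := by
    intro Lb hLbpi hKLb
    have hWL : W ≤ Lb.comap mk := by
      intro w hw
      have h1 : mk w = 1 := hmkker.mpr hw
      have : mk w ∈ Lb := by rw [h1]; exact Lb.one_mem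
      exact this
    have hKL : K ≤ Lb.comap mk :=
      le_trans (Subgroup.le_comap_map mk K) (Subgroup.comap_mono hKLb)
    have hLmap : (Lb.comap mk).map mk = Lb :=
      Subgroup.map_comap_eq_self_of_surjective hmksurj _
    have hLpi : IsPiGroup π (Lb.comap mk) := by
      refine isPiGroup_of_quotient hWL hWpi ?_
      rw [← hmk, hLmap]
      exact hLbpi
    have hcomapK := hK.2 _ hLpi hKL
    rw [← hLmap, hcomapK]
  -- GW = Eb.comap mk
  have hGWcomap : GW = Eb.comap mk := by
    have h1 : Eb.comap mk = GW ⊔ mk.ker := by rw [hEb]; exact Subgroup.comap_map_eq mk GW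
    rw [h1, hmk, QuotientGroup.ker_mk', sup_eq_left.mpr hWGW]
  -- normalizer correspondences
  have hG0toQ : ∀ {u : Gstar}, u ∈ G0 → mk u ∈ (Subgroup.normalizer (Eb : Set _)) := by
    intro u hu
    rw [Subgroup.mem_normalizer_iff]
    intro hb
    obtain ⟨y, rfl⟩ := hmksurj hb
    have hconj : mk u * mk y * (mk u)⁻¹ = mk (u * y * u⁻¹) := by
      simp [map_mul]
    constructor
    · intro hy
      have hyGW : y ∈ GW := by rw [hGWcomap]; exact hy
      have h2 : u * y * u⁻¹ ∈ GW := (Subgroup.mem_normalizer_iff.mp hu y).mp hyGW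
      rw [hconj]
      exact ⟨u * y * u⁻¹, h2, rfl⟩
    · intro hy
      rw [hconj] at hy
      have h2 : u * y * u⁻¹ ∈ GW := by rw [hGWcomap]; exact hy
      have h3 : y ∈ GW := (Subgroup.mem_normalizer_iff.mp hu y).mpr h2
      rw [hGWcomap] at h3
      exact h3
  have hQtoG0 : ∀ {u : Gstar}, mk u ∈ (Subgroup.normalizer (Eb : Set _)) → u ∈ G0 := by
    intro u hu
    rw [Subgroup.mem_normalizer_iff]
    intro h
    have hiff := Subgroup.mem_normalizer_iff.mp hu (mk h)
    have hconj : mk u * mk h * (mk u)⁻¹ = mk (u * h * u⁻¹) := by simp [map_mul]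
    rw [hconj] at hiff
    constructor
    · intro hh
      have : mk h ∈ Eb := by rw [hGWcomap] at hh; exact hh
      have := hiff.mp this
      rw [hGWcomap]
      exact this
    · intro hh
      have h2 : mk (u * h * u⁻¹) ∈ Eb := by rw [hGWcomap] at hh; exact hh
      have := hiff.mpr h2
      rw [hGWcomap]
      exact this
  -- Eb is subnormal in the quotient
  have hGWchain : Relation.ReflTransGen NormalIn GW ⊤ := by
    have := chain_sup_normal hWn hsub
    rwa [top_sup_eq] at this
  have hEbchain : Relation.ReflTransGen NormalIn Eb ⊤ := by
    have := chain_map mk hGWchain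
    rwa [Subgroup.map_top_of_surjective _ hmksurj] at this
  -- ψ : G →* quotient, with range Eb and "kernel" V
  set ψ : G →* Gstar ⧸ W := mk.comp ε with hψ
  have hψrange : ψ.range = Eb := by
    rw [hEbr]
    ext x
    constructor
    · rintro ⟨g, rfl⟩; exact ⟨ε g, ⟨g, rfl⟩, rfl⟩
    · rintro ⟨y, ⟨g, rfl⟩, rfl⟩; exact ⟨g, rfl⟩
  have hψmem : ∀ g : G, ψ g ∈ Eb := fun g => hψrange ▸ ⟨g, rfl⟩
  have hψker : ∀ {g : G}, ψ g = 1 ↔ g ∈ V := by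
    intro g
    have h1 : ψ g = 1 ↔ ε g ∈ W := hmkker
    rw [h1]
    constructor
    · intro hx
      have : g ∈ W.comap ε := hx
      rwa [hWc] at this
    · intro hx
      have : g ∈ W.comap ε := by rw [hWc]; exact hx
      exact this
  have hψeq : ∀ g g' : G, ψ g = ψ g' ↔
      (QuotientGroup.mk' V) g = (QuotientGroup.mk' V) g' := by
    intro g g'
    have h1 : ψ g = ψ g' ↔ ψ (g⁻¹ * g') = 1 := by
      rw [map_mul, map_inv]
      constructor
      · intro h; rw [h]; group
      · intro h
        have h2 : ψ g * ((ψ g)⁻¹ * ψ g') = ψ g * 1 := congrArg (ψ g * ·) h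
        simpa [mul_assoc] using h2.symm
    have h2 : (QuotientGroup.mk' V) g = (QuotientGroup.mk' V) g' ↔ g⁻¹ * g' ∈ V :=
      QuotientGroup.eq
    rw [h1, h2, hψker]
  -- Eb is "simple" and perfect
  have hs1Eb : ∀ Mx : Subgroup (Gstar ⧸ W), NormalIn Mx Eb → Mx = ⊥ ∨ Mx = Eb := by
    intro Mx hMx
    have hMc : (Mx.comap ψ).Normal := by
      constructor
      intro n hn g
      have : ψ (g * n * g⁻¹) ∈ Mx := by
        rw [map_mul, map_mul, map_inv]
        exact hMx.2 (ψ g) (hψmem g) (ψ n) hn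
      exact this
    haveI := hMc
    have hMxr : Mx ≤ ψ.range := hψrange.symm ▸ hMx.1
    have hmapcomap : (Mx.comap ψ).map ψ = Mx := by
      rw [Subgroup.map_comap_eq, inf_eq_right.mpr hMxr]
    haveI : ((Mx.comap ψ).map (QuotientGroup.mk' V)).Normal :=
      Subgroup.Normal.map hMc _ (QuotientGroup.mk'_surjective V)
    rcases hsimple.eq_bot_or_eq_top_of_normal ((Mx.comap ψ).map (QuotientGroup.mk' V))
      inferInstance with hb | ht
    · left
      rw [Subgroup.map_eq_bot_iff, QuotientGroup.ker_mk'] at hb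
      have h2 : (Mx.comap ψ).map ψ ≤ V.map ψ := Subgroup.map_mono hb
      rw [hmapcomap] at h2
      have hVbot : V.map ψ = ⊥ := by
        rw [Subgroup.map_eq_bot_iff]
        intro v hv
        exact hψker.mpr hv
      rw [hVbot] at h2
      exact le_bot_iff.mp h2
    · right
      have hVMc : V ≤ Mx.comap ψ := by
        intro v hv
        have : ψ v = 1 := hψker.mpr hv
        have : ψ v ∈ Mx := by rw [this]; exact Mx.one_mem
        exact this
      have hMctop : Mx.comap ψ = ⊤ := by
        rw [eq_top_iff]
        intro g _
        have : (QuotientGroup.mk' V) g ∈ (Mx.comap ψ).map (QuotientGroup.mk' V) := by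
          rw [ht]; trivial
        rcases this with ⟨m, hm, hmg⟩
        rw [QuotientGroup.mk'_eq_mk'] at hmg
        rcases hmg with ⟨z, hz, rfl⟩
        exact Subgroup.mul_mem _ hm (hVMc hz)
      rw [← hmapcomap, hMctop, ← MonoidHom.range_eq_map, hψrange]
  obtain ⟨a, b, hab⟩ := hnonab
  obtain ⟨g₁, rfl⟩ := QuotientGroup.mk'_surjective V a
  obtain ⟨g₂, rfl⟩ := QuotientGroup.mk'_surjective V b
  have hncomm : ψ g₁ * ψ g₂ ≠ ψ g₂ * ψ g₁ := by
    intro hcontra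
    apply hab
    rw [← map_mul, ← map_mul] at hcontra ⊢
    exact (hψeq _ _).mp hcontra
  have hperfEb : ⁅Eb, Eb⁆ = Eb := by
    have hn : NormalIn ⁅Eb, Eb⁆ Eb := by
      constructor
      · rw [Subgroup.commutator_le]
        intro x hx y hy
        exact Eb.mul_mem (Eb.mul_mem (Eb.mul_mem hx hy) (Eb.inv_mem hx)) (Eb.inv_mem hy)
      · intro e he x hx
        have hconj : conjS e ⁅Eb, Eb⁆ = ⁅Eb, Eb⁆ := by
          have h1 : conjS e Eb = Eb := conjS_eq_of_mem_normalizer (Subgroup.le_normalizer he)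
          calc conjS e ⁅Eb, Eb⁆ = ⁅conjS e Eb, conjS e Eb⁆ := Subgroup.map_commutator _ _ _
          _ = ⁅Eb, Eb⁆ := by rw [h1]
        rw [← hconj]
        exact ⟨x, hx, rfl⟩
    rcases hs1Eb _ hn with hb2 | ht
    · exfalso
      apply hncomm
      have h1 : ⁅ψ g₁, ψ g₂⁆ ∈ (⊥ : Subgroup (Gstar ⧸ W)) := by
        rw [← hb2]
        exact Subgroup.commutator_mem_commutator (hψmem g₁) (hψmem g₂)
      rw [Subgroup.mem_bot, commutatorElement_eq_one_iff_mul_comm] at h1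
      exact h1
    · exact ht
  have hEbne : Eb ≠ ⊥ := by
    intro hb2
    apply hncomm
    have h1 : ψ g₁ ∈ (⊥ : Subgroup (Gstar ⧸ W)) := hb2 ▸ hψmem g₁
    have h2 : ψ g₂ ∈ (⊥ : Subgroup (Gstar ⧸ W)) := hb2 ▸ hψmem g₂
    rw [Subgroup.mem_bot] at h1 h2
    rw [h1, h2]
  -- D and its image
  set D : Subgroup Gstar := ε.range ⊓ M with hD
  set Db : Subgroup (Gstar ⧸ W) := D.map mk with hDb
  set KG0 : Subgroup Gstar := K ⊓ G0 with hKG0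
  set Tb : Subgroup (Gstar ⧸ W) := ⨆ u : ↥KG0, conjS (mk (u : Gstar)) Db with hTb
  set Mb : Subgroup (Gstar ⧸ W) := M.map mk with hMb
  have hDbMb : Db ≤ Mb := Subgroup.map_mono inf_le_right
  have hDbEb : Db ≤ Eb := by rw [hEbr]; exact Subgroup.map_mono inf_le_left
  have hTbMb : Tb ≤ Mb := by
    refine iSup_le fun u => ?_
    rintro x ⟨d, hd, rfl⟩
    have hmu : mk (u : Gstar) ∈ Mb := ⟨(u : Gstar), hKG0M u.2, rfl⟩
    exact Mb.mul_mem (Mb.mul_mem hmu (hDbMb hd)) (Mb.inv_mem hmu)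
  have hTbpi : IsPiGroup π Tb := isPiGroup_of_le hTbMb (isPiGroup_map mk hMpi)
  have hTbEb : Tb ≤ Eb := by
    refine iSup_le fun u => ?_
    rintro x ⟨d, hd, rfl⟩
    have hnu : mk (u : Gstar) ∈ (Subgroup.normalizer (Eb : Set _)) := hG0toQ u.2.2
    exact (Subgroup.mem_normalizer_iff.mp hnu d).mp (hDbEb hd)
  have hDbTb : Db ≤ Tb := by
    have h1 : conjS (mk ((⟨1, KG0.one_mem⟩ : ↥KG0) : Gstar)) Db = Db := by
      have : mk ((⟨1, KG0.one_mem⟩ : ↥KG0) : Gstar) = 1 := by simp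
      rw [this, conjS_one]
    rw [← h1]
    exact le_iSup (fun u : ↥KG0 => conjS (mk (u : Gstar)) Db) ⟨1, KG0.one_mem⟩
  have hTbinvle : ∀ u : ↥KG0, conjS (mk (u : Gstar)) Tb ≤ Tb := by
    intro u
    rw [hTb, conjS_iSup]
    refine iSup_le fun v => ?_
    rw [conjS_conjS, ← map_mul]
    have : (u : Gstar) * (v : Gstar) = ((u * v : ↥KG0) : Gstar) := rfl
    rw [this]
    exact le_iSup (fun w : ↥KG0 => conjS (mk (w : Gstar)) Db) (u * v)
  have hTbinv : ∀ u : ↥KG0, conjS (mk (u : Gstar)) Tb = Tb := by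
    intro u
    refine le_antisymm (hTbinvle u) ?_
    have h2 := hTbinvle u⁻¹
    have h3 : conjS (mk (u : Gstar)) (conjS (mk ((u⁻¹ : ↥KG0) : Gstar)) Tb) = Tb := by
      rw [conjS_conjS, ← map_mul]
      have : (u : Gstar) * ((u⁻¹ : ↥KG0) : Gstar) = 1 := by
        simp
      rw [this, map_one, conjS_one]
    exact le_trans (le_of_eq h3.symm) (Subgroup.map_mono h2)
  set Tstar : Subgroup (Gstar ⧸ W) := ⨆ k : ↥K, conjS (mk (k : Gstar)) Tb with hTstar
  have hterm : ∀ k k' : ↥K, conjS (mk (k : Gstar)) Eb = conjS (mk (k' : Gstar)) Eb →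
      conjS (mk (k : Gstar)) Tb = conjS (mk (k' : Gstar)) Tb := by
    intro k k' hEq
    have hs1' : conjS (mk (((k⁻¹ * k' : ↥K) : Gstar))) Eb = Eb := by
      have h1 : conjS ((mk (k : Gstar))⁻¹) (conjS (mk (k' : Gstar)) Eb) = Eb := by
        rw [← hEq, conjS_conjS, inv_mul_cancel, conjS_one]
      have h2 : mk (((k⁻¹ * k' : ↥K) : Gstar)) = (mk (k : Gstar))⁻¹ * mk (k' : Gstar) := by
        have : ((k⁻¹ * k' : ↥K) : Gstar) = (k : Gstar)⁻¹ * (k' : Gstar) := rfl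
        rw [this, map_mul, map_inv]
      rw [h2, ← conjS_conjS]
      exact h1
    have hsG0 : (((k⁻¹ * k' : ↥K) : Gstar)) ∈ G0 := hQtoG0 (mem_normalizer_of_conjS_eq hs1')
    have hsKG0 : (((k⁻¹ * k' : ↥K) : Gstar)) ∈ KG0 := ⟨(k⁻¹ * k').2, hsG0⟩
    have hinv := hTbinv ⟨_, hsKG0⟩
    have hcalc : conjS (mk (k' : Gstar)) Tb
        = conjS (mk (k : Gstar)) (conjS (mk (((k⁻¹ * k' : ↥K) : Gstar))) Tb) := by
      rw [conjS_conjS, ← map_mul]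
      congr 2
      have : ((k⁻¹ * k' : ↥K) : Gstar) = (k : Gstar)⁻¹ * (k' : Gstar) := rfl
      rw [this]
      group
    rw [hcalc]
    have : conjS (mk (((k⁻¹ * k' : ↥K) : Gstar))) Tb = Tb := hinv
    rw [this]
  have hTstarpi : IsPiGroup π Tstar := by
    haveI : Fintype ↥K := Fintype.ofFinite ↥K
    set f : ↥K → Subgroup (Gstar ⧸ W) := fun k => conjS (mk (k : Gstar)) Tb with hf
    have hTsup : Tstar = (Finset.univ.image f).sup id := by
      apply le_antisymm
      · exact iSup_le fun k =>
          Finset.le_sup (f := id) (Finset.mem_image_of_mem f (Finset.mem_univ k))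
      · refine Finset.sup_le ?_
        rintro A hA
        rcases Finset.mem_image.mp hA with ⟨k, _, rfl⟩
        exact le_iSup f k
    rw [hTsup]
    refine isPiGroup_finsetSup _ ?_ ?_
    · rintro A hA
      rcases Finset.mem_image.mp hA with ⟨k, _, rfl⟩
      refine fun q hq hdvd => hTbpi q hq (hdvd.trans ?_)
      exact Subgroup.card_dvd_of_surjective _ (MonoidHom.subgroupMap_surjective _ _)
    · rintro A hA B hB hAB
      rcases Finset.mem_image.mp hA with ⟨k, _, rfl⟩
      rcases Finset.mem_image.mp hB with ⟨k', _, rfl⟩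
      have hEne : conjS (mk (k : Gstar)) Eb ≠ conjS (mk (k' : Gstar)) Eb :=
        fun hEq => hAB (hterm k k' hEq)
      have hcommEE : ⁅conjS (mk (k : Gstar)) Eb, conjS (mk (k' : Gstar)) Eb⁆ = ⊥ :=
        COMP (chain_conj _ hEbchain) (chain_conj _ hEbchain) (s1_conj _ hs1Eb)
          (perf_conj _ hperfEb) (s1_conj _ hs1Eb) (conjS_ne_bot _ hEbne) hEne
      have hcent := Subgroup.commutator_eq_bot_iff_le_centralizer.mp hcommEE
      have h1 : f k ≤ conjS (mk (k : Gstar)) Eb := Subgroup.map_mono hTbEb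
      have h2 : (f k' : Set (Gstar ⧸ W)) ⊆ (conjS (mk (k' : Gstar)) Eb : Set (Gstar ⧸ W)) := by
        exact_mod_cast Subgroup.map_mono hTbEb
      exact h1.trans (hcent.trans (Subgroup.centralizer_le h2))
  have hKbTstarle : ∀ kk : ↥K, conjS (mk (kk : Gstar)) Tstar ≤ Tstar := by
    intro kk
    rw [hTstar, conjS_iSup]
    refine iSup_le fun k => ?_
    rw [conjS_conjS, ← map_mul]
    have : (kk : Gstar) * (k : Gstar) = ((kk * k : ↥K) : Gstar) := rfl
    rw [this]
    exact le_iSup (fun w : ↥K => conjS (mk (w : Gstar)) Tb) (kk * k)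
  have hKbTstar : Kb ≤ (Subgroup.normalizer (Tstar : Set _)) := by
    rintro xb ⟨kk, hkk, rfl⟩
    refine mem_normalizer_of_conjS_eq ?_
    refine le_antisymm (hKbTstarle ⟨kk, hkk⟩) ?_
    have h2 := hKbTstarle ⟨kk, hkk⟩⁻¹
    have h3 : conjS (mk kk) (conjS (mk ((⟨kk, hkk⟩⁻¹ : ↥K) : Gstar)) Tstar) = Tstar := by
      rw [conjS_conjS, ← map_mul]
      have : kk * ((⟨kk, hkk⟩⁻¹ : ↥K) : Gstar) = 1 := by simp
      rw [this, map_one, conjS_one]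
    exact le_trans (le_of_eq h3.symm) (Subgroup.map_mono h2)
  have hfinal : Kb ⊔ Tstar = Kb :=
    hKbmax _ (isPiGroup_sup hKbTstar hKbpi hTstarpi) le_sup_left
  have hTstarKb : Tstar ≤ Kb := by rw [← hfinal]; exact le_sup_right
  have hTbTstar : Tb ≤ Tstar := by
    have h1 : conjS (mk ((⟨1, K.one_mem⟩ : ↥K) : Gstar)) Tb = Tb := by
      have : mk ((⟨1, K.one_mem⟩ : ↥K) : Gstar) = 1 := by simp
      rw [this, conjS_one]
    rw [← h1]
    exact le_iSup (fun w : ↥K => conjS (mk (w : Gstar)) Tb) ⟨1, K.one_mem⟩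
  have hDbKb : Db ≤ Kb := hDbTb.trans (hTbTstar.trans hTstarKb)
  have hDbHb : Db ≤ Hb := by rw [← hKbEb]; exact le_inf hDbKb hDbEb
  -- descend to Gstar
  intro x hx
  have hxD : x ∈ D := hx
  have hmkx : mk x ∈ Hb := hDbHb ⟨x, hxD, rfl⟩
  rcases hmkx with ⟨h, hh, hhx⟩
  rcases hmkeq.mp hhx with ⟨w, hw, hwx⟩
  have hxr : x ∈ ε.range := by
    rw [hD, Subgroup.mem_inf] at hxD
    exact hxD.1
  have hwr : w ∈ ε.range := by
    have hhr : h ∈ ε.range := hHεr hh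
    have : w = h⁻¹ * x := by rw [← hwx]; group
    rw [this]
    exact Subgroup.mul_mem _ (Subgroup.inv_mem _ hhr) hxr
  have hwVε : w ∈ Vε := by
    rw [← hWr]
    exact ⟨hw, hwr⟩
  rw [← hwx]
  exact Hε.mul_mem hh (hVεHε hwVε)
end

section
/- Let π be a set of primes, let X be a finite group having at least two conjugacy classes of π-maximal subgroups, let Y be an arbitrary finite group, let G = X ≀ Y be the regular wreath product (the semidirect product of the direct power X^Y with Y acting by permuting coordinates), and let φ : G → Y be the natural epimorphism with kernel X^Y. Then every π-subgroup of Y equals φ(H) for some π-maximal subgroup H of G. -/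
/-- The automorphism of the base group `Y → X` given by permuting coordinates by left
translation by `y`. -/
def wreathAut {X Y : Type*} [Group X] [Group Y] (y : Y) : MulAut (Y → X) where
  toFun f := fun z => f (y⁻¹ * z)
  invFun f := fun z => f (y * z)
  left_inv f := by funext z; simp [← mul_assoc]
  right_inv f := by funext z; simp [← mul_assoc]
  map_mul' f g := rfl

/-- The permutation action of `Y` on the base group `Y → X` of the regular wreath
product, as a homomorphism `Y →* MulAut (Y → X)`. -/
def wreathAction (X Y : Type*) [Group X] [Group Y] : Y →* MulAut (Y → X) where
  toFun := wreathAut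
  map_one' := by ext f z; simp [wreathAut]
  map_mul' a b := by ext f z; simp [wreathAut, mul_assoc]

/-- The regular wreath product `X ≀ Y`: the semidirect product of the base group `X^Y`
with `Y` acting by permuting coordinates. -/
abbrev RegularWreathProductSD (X Y : Type*) [Group X] [Group Y] : Type _ :=
  SemidirectProduct (Y → X) Y (wreathAction X Y)

section Helpers
variable {π : Set ℕ}

lemma piGroup_of_prime_orders {G : Type*} [Group G] [Finite G] {K : Subgroup G}
    (h : ∀ x : G, x ∈ K → ∀ p : ℕ, p.Prime → orderOf x = p → p ∈ π) : IsPiGroup π K := by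
  intro p hp hdvd
  haveI : Fintype K := Fintype.ofFinite K
  haveI : Fact p.Prime := ⟨hp⟩
  rw [Nat.card_eq_fintype_card] at hdvd
  obtain ⟨g, hg⟩ := exists_prime_orderOf_dvd_card (G := K) p hdvd
  have : orderOf (g : G) = p := by
    rw [← hg]; exact orderOf_injective K.subtype K.subtype_injective g
  exact h g g.2 p hp this

lemma exists_piMaximal_ge {G : Type*} [Group G] [Finite G] (K : Subgroup G)
    (hK : IsPiGroup π K) : ∃ H : Subgroup G, IsPiMaximal π H ∧ K ≤ H := by
  haveI : Finite (Subgroup G) :=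
    Finite.of_injective (fun H : Subgroup G => (H : Set G)) SetLike.coe_injective
  have wf : WellFounded ((· > ·) : Subgroup G → Subgroup G → Prop) :=
    (Finite.to_wellFoundedGT).wf
  obtain ⟨H, ⟨hHpi, hKH⟩, hmin⟩ := wf.has_min {L | IsPiGroup π L ∧ K ≤ L} ⟨K, hK, le_rfl⟩
  refine ⟨H, ⟨hHpi, fun L hL hHL => ?_⟩, hKH⟩
  by_contra hne
  exact hmin L ⟨hL, hKH.trans hHL⟩ (lt_of_le_of_ne hHL (Ne.symm hne))

lemma piGroup_map_equiv {G G' : Type*} [Group G] [Group G'] (e : G ≃* G') {K : Subgroup G}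
    (hK : IsPiGroup π K) : IsPiGroup π (K.map e.toMonoidHom) := by
  intro p hp hdvd
  have : Nat.card (K.map e.toMonoidHom) = Nat.card K :=
    Nat.card_congr (K.equivMapOfInjective e.toMonoidHom e.injective).toEquiv.symm
  exact hK p hp (this ▸ hdvd)

lemma map_equiv_map_symm {G G' : Type*} [Group G] [Group G'] (e : G ≃* G') (K : Subgroup G) :
    (K.map e.toMonoidHom).map e.symm.toMonoidHom = K := by
  rw [Subgroup.map_map]
  convert Subgroup.map_id K
  ext x; simp

lemma piMaximal_map_equiv {G : Type*} [Group G] (e : G ≃* G) {A : Subgroup G}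
    (hA : IsPiMaximal π A) : IsPiMaximal π (A.map e.toMonoidHom) := by
  refine ⟨piGroup_map_equiv e hA.1, fun L hL hle => ?_⟩
  have h1 : A ≤ L.map e.symm.toMonoidHom := by
    rw [← map_equiv_map_symm e A]
    exact Subgroup.map_mono hle
  have h2 : L.map e.symm.toMonoidHom = A := hA.2 _ (piGroup_map_equiv e.symm hL) h1
  calc L = (L.map e.symm.toMonoidHom).map e.toMonoidHom :=
        (map_equiv_map_symm e.symm L).symm
    _ = A.map e.toMonoidHom := by rw [h2]

lemma orderOf_dvd_card_of_mem {G : Type*} [Group G] {K : Subgroup G} {x : G} (h : x ∈ K) :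
    orderOf x ∣ Nat.card K :=
  Subgroup.orderOf_dvd_natCard K h

end Helpers

/-- Let `X` be a finite group with at least two conjugacy classes of `π`-maximal
subgroups, `Y` any finite group, `G = X ≀ Y` the regular wreath product and
`φ : G → Y` the natural epimorphism (with kernel `X^Y`). Then every `π`-subgroup of `Y`
is the image under `φ` of some `π`-maximal subgroup of `G`. -/
theorem stmt19 (π : Set ℕ) (X Y : Type) [Group X] [Finite X] [Group Y] [Finite Y]
    (htwoclasses : ∃ A B : Subgroup X, IsPiMaximal π A ∧ IsPiMaximal π B ∧
      ∀ g : X, A.map (MulAut.conj g).toMonoidHom ≠ B) :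
    ∀ S : Subgroup Y, IsPiGroup π S →
      ∃ H : Subgroup (RegularWreathProductSD X Y), IsPiMaximal π H ∧
        H.map SemidirectProduct.rightHom = S := by
  classical
  obtain ⟨A, B, hA, hB, hAB⟩ := htwoclasses
  intro S hS
  haveI : Finite (RegularWreathProductSD X Y) :=
    Finite.of_injective (fun g : RegularWreathProductSD X Y => (g.left, g.right))
      (fun a b h => by
        cases a; cases b
        simp only [Prod.mk.injEq] at h
        simp [h.1, h.2])
  -- apply of the action
  have haction : ∀ (y : Y) (f : Y → X) (z : Y), (wreathAction X Y y) f z = f (y⁻¹ * z) :=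
    fun y f z => rfl
  -- the diagonal-type subgroup of the base
  set DD : Subgroup (Y → X) := Subgroup.pi Set.univ (fun z => if z ∈ S then A else B) with hDDdef
  have memDD : ∀ f : Y → X, f ∈ DD ↔ ∀ z : Y, f z ∈ (if z ∈ S then A else B) := by
    intro f
    rw [hDDdef, Subgroup.mem_pi]
    exact ⟨fun h z => h z trivial, fun h z _ => h z⟩
  have hDDinv : ∀ y ∈ S, ∀ f ∈ DD, (wreathAction X Y y) f ∈ DD := by
    intro y hy f hf
    rw [memDD] at hf ⊢
    intro z
    have hiff : (y⁻¹ * z ∈ S) ↔ (z ∈ S) := by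
      constructor
      · intro h; have := S.mul_mem hy h; rwa [mul_inv_cancel_left] at this
      · intro h; exact S.mul_mem (S.inv_mem hy) h
    rw [haction]
    have := hf (y⁻¹ * z)
    by_cases hz : z ∈ S
    · rw [if_pos hz]; rw [if_pos (hiff.mpr hz)] at this; exact this
    · rw [if_neg hz]; rw [if_neg (fun h => hz (hiff.mp h))] at this; exact this
  -- the starting π-subgroup H0 = DD ⋊ S
  set H0 : Subgroup (RegularWreathProductSD X Y) :=
    { carrier := {g | g.left ∈ DD ∧ g.right ∈ S}
      one_mem' := by
        refine ⟨?_, ?_⟩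
        · simpa using DD.one_mem
        · simpa using S.one_mem
      mul_mem' := by
        rintro a b ⟨ha1, ha2⟩ ⟨hb1, hb2⟩
        refine ⟨?_, ?_⟩
        · rw [SemidirectProduct.mul_left]
          exact DD.mul_mem ha1 (hDDinv a.right ha2 b.left hb1)
        · rw [SemidirectProduct.mul_right]
          exact S.mul_mem ha2 hb2
      inv_mem' := by
        rintro a ⟨ha1, ha2⟩
        refine ⟨?_, ?_⟩
        · rw [SemidirectProduct.inv_left]
          exact hDDinv a.right⁻¹ (S.inv_mem ha2) a.left⁻¹ (DD.inv_mem ha1)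
        · rw [SemidirectProduct.inv_right]
          exact S.inv_mem ha2 } with hH0def
  have memH0 : ∀ g : RegularWreathProductSD X Y, g ∈ H0 ↔ g.left ∈ DD ∧ g.right ∈ S := by
    intro g; rfl
  -- H0 is a π-group
  have hH0pi : IsPiGroup π H0 := by
    apply piGroup_of_prime_orders
    intro x hx p hp hord
    rw [memH0] at hx
    by_cases hy : x.right = 1
    · -- x lies in the base; some coordinate has order p
      have hxeq : x = SemidirectProduct.inl x.left := by
        apply SemidirectProduct.ext
        · rw [SemidirectProduct.left_inl]
        · rw [SemidirectProduct.right_inl, hy]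
      have h1 : orderOf (SemidirectProduct.inl (φ := wreathAction X Y) x.left)
          = orderOf x.left :=
        orderOf_injective _ SemidirectProduct.inl_injective _
      have hordl : orderOf x.left = p := by rw [← h1, ← hxeq]; exact hord
      have hxne : x.left ≠ 1 := by
        intro hone
        rw [hone, orderOf_one] at hordl
        exact hp.one_lt.ne' hordl.symm
      obtain ⟨z, hz⟩ : ∃ z : Y, x.left z ≠ 1 := by
        by_contra hall
        push_neg at hall
        exact hxne (funext hall)
      have hpow : (x.left z) ^ p = 1 := by
        have := pow_orderOf_eq_one x.left
        rw [hordl] at this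
        calc (x.left z) ^ p = (x.left ^ p) z := rfl
          _ = 1 := by rw [this]; rfl
      have hdvd : orderOf (x.left z) ∣ p := orderOf_dvd_of_pow_eq_one hpow
      have hop : orderOf (x.left z) = p := by
        rcases (Nat.Prime.eq_one_or_self_of_dvd hp _ hdvd) with h | h
        · exact absurd (orderOf_eq_one_iff.mp h) hz
        · exact h
      have hmem := (memDD (x.left)).mp hx.1 z
      by_cases hzS : z ∈ S
      · rw [if_pos hzS] at hmem
        exact hA.1 p hp (hop ▸ orderOf_dvd_card_of_mem hmem)
      · rw [if_neg hzS] at hmem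
        exact hB.1 p hp (hop ▸ orderOf_dvd_card_of_mem hmem)
    · -- the image in Y has order p
      have h1 : orderOf x.right ∣ p := by
        rw [← hord]
        have := orderOf_map_dvd (SemidirectProduct.rightHom (φ := wreathAction X Y)) x
        rwa [SemidirectProduct.rightHom_eq_right] at this
      have hop : orderOf x.right = p := by
        rcases (Nat.Prime.eq_one_or_self_of_dvd hp _ h1) with h | h
        · exact absurd (orderOf_eq_one_iff.mp h) hy
        · exact h
      exact hS p hp (hop ▸ orderOf_dvd_card_of_mem hx.2)
  obtain ⟨H, hHmax, hH0H⟩ := exists_piMaximal_ge H0 hH0pi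
  refine ⟨H, hHmax, ?_⟩
  -- key claim: every element of H maps into S
  have key : ∀ h ∈ H, h.right ∈ S := by
    intro h hh
    by_contra hy
    set f := h.left with hf
    set y := h.right with hyy
    set N : Subgroup (Y → X) := H.comap
      (SemidirectProduct.inl (N := Y → X) (G := Y) (φ := wreathAction X Y)) with hNdef
    have memN : ∀ g : Y → X, g ∈ N ↔
        SemidirectProduct.inl (φ := wreathAction X Y) g ∈ H := fun g => Iff.rfl
    have hDDN : DD ≤ N := by
      intro g hg
      rw [memN]
      apply hH0H
      rw [memH0]
      refine ⟨?_, ?_⟩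
      · rwa [SemidirectProduct.left_inl]
      · rw [SemidirectProduct.right_inl]; exact S.one_mem
    set P : Y → Subgroup X := fun z => N.map (Pi.evalMonoidHom (fun _ => X) z) with hPdef
    have hPpi : ∀ z, IsPiGroup π (P z) := by
      intro z
      apply piGroup_of_prime_orders
      rintro x hx p hp hord
      obtain ⟨g, hgN, hgz⟩ := hx
      have d1 : orderOf x ∣ orderOf g := by
        rw [← hgz]
        exact orderOf_map_dvd (Pi.evalMonoidHom (fun _ => X) z) g
      have d2 : orderOf (SemidirectProduct.inl (φ := wreathAction X Y) g) = orderOf g :=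
        orderOf_injective _ SemidirectProduct.inl_injective g
      have d3 : orderOf (SemidirectProduct.inl (φ := wreathAction X Y) g) ∣ Nat.card H :=
        orderOf_dvd_card_of_mem hgN
      exact hHmax.1 p hp (hord ▸ (d1.trans (d2 ▸ d3)))
    have hsingle : ∀ (z : Y) (a : X), a ∈ (if z ∈ S then A else B) →
        Pi.mulSingle z a ∈ DD := by
      intro z a ha
      rw [memDD]
      intro w
      rcases eq_or_ne w z with rfl | hw
      · rwa [Pi.mulSingle_eq_same]
      · rw [Pi.mulSingle_eq_of_ne hw]
        split <;> exact Subgroup.one_mem _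
    have hsub : ∀ z : Y, (if z ∈ S then A else B) ≤ P z := by
      intro z a ha
      exact ⟨Pi.mulSingle z a, hDDN (hsingle z a ha), by
        simpa using Pi.mulSingle_eq_same (f := fun _ : Y => X) z a⟩
    -- conjugation stability of N
    have hconj : ∀ g ∈ N, f * (wreathAction X Y y) g * f⁻¹ ∈ N := by
      intro g hg
      rw [memN]
      have heq : SemidirectProduct.inl (φ := wreathAction X Y) (f * (wreathAction X Y y) g * f⁻¹)
          = h * SemidirectProduct.inl g * h⁻¹ := by
        apply SemidirectProduct.ext
        · simp only [SemidirectProduct.left_inl, SemidirectProduct.mul_left,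
            SemidirectProduct.inv_left, SemidirectProduct.mul_right,
            SemidirectProduct.right_inl, SemidirectProduct.inv_right, ← hf, ← hyy]
          rw [mul_one, ← MulAut.mul_apply, ← map_mul, mul_inv_cancel, map_one,
            MulAut.one_apply]
        · simp only [SemidirectProduct.right_inl, SemidirectProduct.mul_right,
            SemidirectProduct.inv_right, ← hyy]
          simp
      rw [heq]
      exact H.mul_mem (H.mul_mem hh (hg)) (H.inv_mem hh)
    -- the conjugate of A lands in P y
    have hstep : ∀ a ∈ A, f y * a * (f y)⁻¹ ∈ P y := by
      intro a ha
      have hg : Pi.mulSingle (1 : Y) a ∈ DD :=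
        hsingle 1 a (by rw [if_pos S.one_mem]; exact ha)
      have hc : f * (wreathAction X Y y) (Pi.mulSingle (1 : Y) a) * f⁻¹ ∈ N :=
        hconj _ (hDDN hg)
      refine ⟨_, hc, ?_⟩
      show (f * (wreathAction X Y y) (Pi.mulSingle (1 : Y) a) * f⁻¹) y = f y * a * (f y)⁻¹
      have hmid : (wreathAction X Y y) (Pi.mulSingle (1 : Y) a) y = a := by
        rw [haction, inv_mul_cancel]
        exact Pi.mulSingle_eq_same (M := fun _ : Y => X) 1 a
      simp only [Pi.mul_apply, Pi.inv_apply, hmid]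
    have hPyB : P y = B := by
      have h1 : B ≤ P y := by have := hsub y; rwa [if_neg hy] at this
      exact hB.2 (P y) (hPpi y) h1
    have hle : A.map (MulAut.conj (f y)).toMonoidHom ≤ B := by
      rintro x ⟨a, ha, rfl⟩
      rw [← hPyB]
      simpa [MulAut.conj_apply] using hstep a ha
    have hfinal : B = A.map (MulAut.conj (f y)).toMonoidHom :=
      (piMaximal_map_equiv (MulAut.conj (f y)) hA).2 B hB.1 hle
    exact hAB (f y) hfinal.symm
  -- conclusion
  apply le_antisymm
  · rintro s ⟨h, hh, rfl⟩
    rw [SemidirectProduct.rightHom_eq_right]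
    exact key h hh
  · intro s hs
    refine ⟨SemidirectProduct.inr s, hH0H ?_, SemidirectProduct.rightHom_inr s⟩
    rw [memH0]
    refine ⟨?_, ?_⟩
    · rw [SemidirectProduct.left_inr]; exact DD.one_mem
    · rwa [SemidirectProduct.right_inr]
end
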